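/- arXiv:1003.0305 — 8 statements merged into one kernel-verified Lean document; each statement's English description precedes it below -/
import Mathlib

section
/- Let S be an asymptotically compact semiflow on a complete metric space X. Let x_n be a bounded sequence in X such that S(t)x_n is contained in a fixed bounded subset B of X for all t ≥ 0 and all n ≥ 1, and let τ_n → +∞. Define γ_n(t) = S(τ_n + t)x_n for t ∈ (−τ_n, +∞). Then there is a subsequence of (γ_n) that converges, uniformly on every compact interval of ℝ, to a complete trajectory γ of S. -/
open Metric Set Filter Topology Bornology

/-- A semiflow on a metric space `X`: a map `S : [0,∞) × X → X`, continuous on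
`[0,∞) × X`, with `S 0 x = x` and `S (t+s) x = S t (S s x)` for `t, s ≥ 0`. -/
structure Semiflow (X : Type*) [MetricSpace X] where
  toFun : ℝ → X → X
  continuousOn : ContinuousOn (fun p : ℝ × X => toFun p.1 p.2) (Set.Ici (0:ℝ) ×ˢ Set.univ)
  map_zero : ∀ x, toFun 0 x = x
  map_add : ∀ (t s : ℝ), 0 ≤ t → 0 ≤ s → ∀ x, toFun (t + s) x = toFun t (toFun s x)

namespace Semiflow

variable {X : Type*} [MetricSpace X] (φ : Semiflow X)

/-- Asymptotic compactness: every bounded sequence `x n`, with times `t n → ∞`,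
such that `S (t n) (x n)` is bounded, has a convergent subsequence of images. -/
def AsympCompact : Prop :=
  ∀ (x : ℕ → X) (t : ℕ → ℝ), (∀ n, 0 ≤ t n) →
    IsBounded (Set.range x) → Tendsto t atTop atTop →
    IsBounded (Set.range fun n => φ.toFun (t n) (x n)) →
    ∃ (y : X) (k : ℕ → ℕ), StrictMono k ∧
      Tendsto (fun n => φ.toFun (t (k n)) (x (k n))) atTop (𝓝 y)

/-- `M` attracts `B`: for every `ε > 0` there is `T > 0` with
`S t B ⊆ B(M,ε)` for all `t > T`. -/
def Attracts (M B : Set X) : Prop :=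
  ∀ ε > (0:ℝ), ∃ T > (0:ℝ), ∀ t > T, ∀ x ∈ B, infDist (φ.toFun t x) M < ε

/-- `M` is invariant: `S t M = M` for all `t ≥ 0`. -/
def Invariant (M : Set X) : Prop :=
  ∀ t ≥ (0:ℝ), φ.toFun t '' M = M

/-- An attractor: a compact invariant set attracting a neighborhood of itself. -/
def IsAttractor (A : Set X) : Prop :=
  IsCompact A ∧ φ.Invariant A ∧ ∃ U : Set X, A ⊆ interior U ∧ φ.Attracts A U

/-- The attraction basin of `A`: points whose orbits converge to `A`. -/
def basin (A : Set X) : Set X :=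
  {x | Tendsto (fun t : ℝ => infDist (φ.toFun t x) A) atTop (𝓝 0)}

/-- The ω-limit set of a set `A`. -/
def omegaLimit (A : Set X) : Set X :=
  {y | ∃ (x : ℕ → X) (t : ℕ → ℝ), (∀ n, x n ∈ A) ∧ (∀ n, 0 ≤ t n) ∧
    Tendsto t atTop atTop ∧ Tendsto (fun n => φ.toFun (t n) (x n)) atTop (𝓝 y)}

/-- A complete trajectory of the semiflow. -/
def IsCompleteTraj (γ : ℝ → X) : Prop :=
  ∀ s t : ℝ, s ≤ t → γ t = φ.toFun (t - s) (γ s)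

/-- ω-limit set of a complete trajectory. -/
def trajOmega (γ : ℝ → X) : Set X :=
  {y | ∃ t : ℕ → ℝ, Tendsto t atTop atTop ∧ Tendsto (fun n => γ (t n)) atTop (𝓝 y)}

/-- α-limit set of a complete trajectory. -/
def trajAlpha (γ : ℝ → X) : Set X :=
  {y | ∃ t : ℕ → ℝ, Tendsto t atTop atBot ∧ Tendsto (fun n => γ (t n)) atTop (𝓝 y)}

/-- The dual repeller of `A` inside `𝒜`. -/
def dualRepeller (𝒜 A : Set X) : Set X :=
  {x ∈ 𝒜 | φ.omegaLimit {x} ∩ A = ∅}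

/-- `A` is an attractor of the restricted semiflow on the invariant set `𝒜`:
`A ⊆ 𝒜` is compact, invariant, and attracts a relative neighborhood of itself in `𝒜`. -/
def IsAttractorIn (𝒜 A : Set X) : Prop :=
  A ⊆ 𝒜 ∧ IsCompact A ∧ φ.Invariant A ∧
    ∃ V : Set X, IsOpen V ∧ A ⊆ V ∧ φ.Attracts A (𝒜 ∩ V)

/-- `M 1, …, M l` is a Morse decomposition of `𝒜` with Morse filtration
`∅ = A 0 ⊊ A 1 ⊊ ⋯ ⊊ A l = 𝒜`. -/
def IsMorseDecompositionWithFiltration (𝒜 : Set X) (l : ℕ) (M A : ℕ → Set X) : Prop :=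
  A 0 = (∅ : Set X) ∧ A l = 𝒜 ∧
  (∀ k, 1 ≤ k → k ≤ l → φ.IsAttractorIn 𝒜 (A k)) ∧
  (∀ k, 1 ≤ k → k ≤ l → A (k - 1) ⊂ A k) ∧
  (∀ k, 1 ≤ k → k ≤ l → M k = A k ∩ φ.dualRepeller 𝒜 (A (k - 1)))

/-- `M 1, …, M l` is a Morse decomposition of `𝒜`. -/
def IsMorseDecomposition (𝒜 : Set X) (l : ℕ) (M : ℕ → Set X) : Prop :=
  ∃ A : ℕ → Set X, φ.IsMorseDecompositionWithFiltration 𝒜 l M A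

/-- The Dini derivative of `V` along the semiflow. -/
noncomputable def dini (V : X → ℝ) (x : X) : ℝ :=
  Filter.limsup (fun t : ℝ => (V (φ.toFun t x) - V x) / t) (𝓝[>] (0:ℝ))

end Semiflow

/-- `A ⊂⊂ B`: the closure of `A` is contained in the interior of `B` and
`dist (A, ∂B) > 0`. -/
def WayInside {X : Type*} [MetricSpace X] (A B : Set X) : Prop :=
  closure A ⊆ interior B ∧ ∃ δ > (0:ℝ), ∀ x ∈ A, ∀ y ∈ frontier B, δ ≤ dist x y

/-- `V` is radially unbounded on the open set `Ω`. -/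
def RadiallyUnbounded {X : Type*} [MetricSpace X] (V : X → ℝ) (Ω : Set X) : Prop :=
  ∀ R > (0:ℝ), ∃ B : Set X, IsBounded B ∧ IsClosed B ∧ B ⊆ Ω ∧ WayInside B Ω ∧
    ∀ x ∈ Ω \ B, R < V x

/-- `F` is a strong deformation retract of `E`. -/
def IsStrongDeformationRetract {X : Type*} [MetricSpace X] (F E : Set X) : Prop :=
  F ⊆ E ∧ ∃ H : ℝ × X → X, ContinuousOn H (Set.Icc (0:ℝ) 1 ×ˢ E) ∧
    (∀ x ∈ E, H (0, x) = x) ∧ (∀ x ∈ E, H (1, x) ∈ F) ∧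
    (∀ σ ∈ Set.Icc (0:ℝ) 1, ∀ x ∈ F, H (σ, x) = x) ∧
    (∀ σ ∈ Set.Icc (0:ℝ) 1, ∀ x ∈ E, H (σ, x) ∈ E)

namespace Semiflow

variable {X : Type*} [MetricSpace X] (φ : Semiflow X)

/-- A Morse–Lyapunov function of the Morse decomposition `M` on `Ω`. -/
def IsMorseLyapunov (Ω : Set X) (l : ℕ) (M : ℕ → Set X) (V : X → ℝ) : Prop :=
  ContinuousOn V Ω ∧
  (∀ k, 1 ≤ k → k ≤ l → ∃ c : ℝ, ∀ x ∈ M k, V x = c) ∧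
  (∀ x ∈ Ω \ ⋃ k ∈ Set.Icc 1 l, M k,
    StrictAntiOn (fun t : ℝ => V (φ.toFun t x)) (Set.Ici (0:ℝ)))

/-- A strict Morse–Lyapunov function: the values on the Morse sets are increasing. -/
def IsStrictMorseLyapunov (Ω : Set X) (l : ℕ) (M : ℕ → Set X) (V : X → ℝ) : Prop :=
  φ.IsMorseLyapunov Ω l M V ∧ ∃ c : ℕ → ℝ,
    (∀ k, 1 ≤ k → k ≤ l → ∀ x ∈ M k, V x = c k) ∧
    (∀ j k, 1 ≤ j → j < k → k ≤ l → c j < c k)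

end Semiflow


/-! ### Auxiliary lemmas for `stmt0` -/

open Metric Set Filter Topology Bornology in
/-- For `t ≥ 0` fixed, `z ↦ S t z` is continuous. -/
private lemma Semiflow.cont_fixed_time {X : Type*} [MetricSpace X] (φ : Semiflow X)
    {t : ℝ} (ht : 0 ≤ t) : Continuous (fun z : X => φ.toFun t z) :=
  φ.continuousOn.comp_continuous (Continuous.prodMk_right t)
    (fun z => ⟨ht, Set.mem_univ z⟩)

open Metric Set Filter Topology Bornology in
/-- Uniform (in time on a compact interval) continuity of the semiflow at a point. -/
private lemma Semiflow.unif_key {X : Type*} [MetricSpace X] (φ : Semiflow X) {c d : ℝ}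
    (hc : 0 ≤ c) (y : X) {ε : ℝ} (hε : 0 < ε) :
    ∃ δ > (0:ℝ), ∀ s ∈ Set.Icc c d, ∀ z : X, dist z y < δ →
      dist (φ.toFun s z) (φ.toFun s y) < ε := by
  set F : ℝ × X → X := fun p => φ.toFun (max p.1 0) p.2 with hF
  have hFc : Continuous F :=
    φ.continuousOn.comp_continuous
      ((continuous_fst.max continuous_const).prodMk continuous_snd)
      (fun p => ⟨Set.mem_Ici.mpr (le_max_right _ _), Set.mem_univ _⟩)
  have hg : Continuous (fun p : ℝ × X => dist (F p) (F (p.1, y))) :=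
    hFc.dist (hFc.comp (continuous_fst.prodMk continuous_const))
  have hopen : IsOpen {p : ℝ × X | dist (F p) (F (p.1, y)) < ε} :=
    isOpen_lt hg continuous_const
  have hsub : Set.Icc c d ×ˢ ({y} : Set X) ⊆ {p : ℝ × X | dist (F p) (F (p.1, y)) < ε} := by
    rintro ⟨s, z⟩ ⟨hs, hz⟩
    simp only [Set.mem_singleton_iff] at hz
    subst hz
    simpa using hε
  obtain ⟨u, v, hu, hv, hcu, hyv, huv⟩ :=
    generalized_tube_lemma isCompact_Icc isCompact_singleton hopen hsub
  obtain ⟨δ, hδ, hball⟩ := Metric.isOpen_iff.1 hv y (hyv rfl)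
  refine ⟨δ, hδ, fun s hs z hz => ?_⟩
  have hmem : (s, z) ∈ {p : ℝ × X | dist (F p) (F (p.1, y)) < ε} :=
    huv ⟨hcu hs, hball hz⟩
  have hmax : max s 0 = s := max_eq_left (hc.trans hs.1)
  simpa [hF, hmax] using hmem

open Metric Set Filter Topology Bornology in
/-- One extraction step from asymptotic compactness. -/
private lemma Semiflow.extract_aux {X : Type*} [MetricSpace X] (φ : Semiflow X)
    (hac : φ.AsympCompact) (x : ℕ → X) (hx : Bornology.IsBounded (Set.range x))
    (B : Set X) (hB : Bornology.IsBounded B)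
    (horb : ∀ t : ℝ, 0 ≤ t → ∀ n : ℕ, 1 ≤ n → φ.toFun t (x n) ∈ B)
    (τ : ℕ → ℝ) (hτ : Filter.Tendsto τ Filter.atTop Filter.atTop)
    (m : ℕ) (j : ℕ → ℕ) (hj : StrictMono j) :
    ∃ k : ℕ → ℕ, StrictMono k ∧ ∃ y : X,
      Tendsto (fun n => φ.toFun (τ (j (k n)) - m) (x (j (k n)))) atTop (𝓝 y) := by
  set t : ℕ → ℝ := fun n => max (τ (j n) - m) 0 with ht
  have ht0 : ∀ n, 0 ≤ t n := fun n => le_max_right _ _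
  have hτj : Tendsto (fun n => τ (j n)) atTop atTop := hτ.comp hj.tendsto_atTop
  have h1 : Tendsto (fun n => τ (j n) - (m : ℝ)) atTop atTop := by
    simpa [sub_eq_add_neg] using tendsto_atTop_add_const_right atTop (-(m : ℝ)) hτj
  have htt : Tendsto t atTop atTop := tendsto_atTop_mono (fun n => le_max_left _ _) h1
  have hbd : Bornology.IsBounded (Set.range fun n => φ.toFun (t n) (x (j n))) := by
    apply (hB.insert (φ.toFun (t 0) (x (j 0)))).subset
    rintro _ ⟨n, rfl⟩
    rcases Nat.eq_zero_or_pos n with hn | hn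
    · subst hn; exact Set.mem_insert _ _
    · exact Set.mem_insert_of_mem _ (horb _ (ht0 n) _ (le_trans hn hj.le_apply))
  obtain ⟨y, k, hk, hky⟩ := hac (fun n => x (j n)) t ht0
    (hx.subset (Set.range_comp_subset_range j x)) htt hbd
  refine ⟨k, hk, y, Tendsto.congr' ?_ hky⟩
  filter_upwards [(h1.comp hk.tendsto_atTop).eventually_ge_atTop 0] with n hn
  have : t (k n) = τ (j (k n)) - (m : ℝ) := max_eq_left hn
  rw [this]

/-- Iterated extraction: a chain of nested subsequences. -/
private lemma semiflow_chain (P : ℕ → (ℕ → ℕ) → Prop)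
    (h : ∀ (m : ℕ) (j : ℕ → ℕ), StrictMono j → ∃ k, StrictMono k ∧ P m (j ∘ k)) :
    ∃ J : ℕ → ℕ → ℕ, (∀ m, StrictMono (J m)) ∧ (∀ m, P m (J m)) ∧
      ∀ m, ∃ k : ℕ → ℕ, StrictMono k ∧ ∀ n, J (m + 1) n = J m (k n) := by
  classical
  have key : ∀ (m : ℕ) (j : {f : ℕ → ℕ // StrictMono f}),
      ∃ j' : {f : ℕ → ℕ // StrictMono f}, P m j'.1 ∧
        ∃ k : ℕ → ℕ, StrictMono k ∧ ∀ n, j'.1 n = j.1 (k n) := by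
    intro m j
    obtain ⟨k, hk, hP⟩ := h m j.1 j.2
    exact ⟨⟨j.1 ∘ k, j.2.comp hk⟩, hP, k, hk, fun n => rfl⟩
  choose F hF1 hF2 using key
  let G : ℕ → {f : ℕ → ℕ // StrictMono f} := fun m =>
    Nat.rec (F 0 ⟨id, strictMono_id⟩) (fun m jm => F (m + 1) jm) m
  refine ⟨fun m => (G m).1, fun m => (G m).2, fun m => ?_, fun m => ?_⟩
  · cases m with
    | zero => exact hF1 0 ⟨id, strictMono_id⟩
    | succ m => exact hF1 (m + 1) (G m)
  · exact hF2 (m + 1) (G m)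

/-- If `x n` is a bounded sequence whose orbits stay in a fixed bounded set `B`,
and `τ n → +∞`, then a subsequence of `γ_n(t) = S (τ n + t) (x n)` converges, uniformly on
every compact interval, to a complete trajectory of the semiflow. -/
theorem stmt0 {X : Type*} [MetricSpace X] [CompleteSpace X] (φ : Semiflow X)
    (hac : φ.AsympCompact)
    (x : ℕ → X) (hx : Bornology.IsBounded (Set.range x))
    (B : Set X) (hB : Bornology.IsBounded B)
    (horb : ∀ t : ℝ, 0 ≤ t → ∀ n : ℕ, 1 ≤ n → φ.toFun t (x n) ∈ B)
    (τ : ℕ → ℝ) (hτ : Filter.Tendsto τ Filter.atTop Filter.atTop) :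
    ∃ k : ℕ → ℕ, StrictMono k ∧ ∃ γ : ℝ → X, φ.IsCompleteTraj γ ∧
      ∀ a b : ℝ, a ≤ b →
        TendstoUniformlyOn (fun n t => φ.toFun (τ (k n) + t) (x (k n))) γ
          Filter.atTop (Set.Icc a b) := by
  classical
  -- Diagonal extraction: a subsequence `d` along which `S (τ (d n) - m) (x (d n))`
  -- converges for every `m : ℕ`.
  obtain ⟨J, hJmono, hJP, hJstep⟩ := semiflow_chain
    (fun m j => ∃ y : X, Filter.Tendsto (fun n => φ.toFun (τ (j n) - m) (x (j n)))
      Filter.atTop (𝓝 y))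
    (fun m j hj => by
      obtain ⟨k, hk, y, hy⟩ := φ.extract_aux hac x hx B hB horb τ hτ m j hj
      exact ⟨k, hk, y, hy⟩)
  set d : ℕ → ℕ := fun n => J n n with hd
  have hdmono : StrictMono d := by
    apply strictMono_nat_of_lt_succ
    intro n
    obtain ⟨k, hk, hJk⟩ := hJstep n
    show J n n < J (n + 1) (n + 1)
    rw [hJk]
    exact (hJmono n) (lt_of_lt_of_le (Nat.lt_succ_self n) hk.le_apply)
  have hshift : ∀ m q p, ∃ i, p ≤ i ∧ J (m + q) p = J m i := by
    intro m q
    induction q with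
    | zero => exact fun p => ⟨p, le_refl p, rfl⟩
    | succ q ih =>
      intro p
      obtain ⟨k, hk, hJk⟩ := hJstep (m + q)
      obtain ⟨i, hi, hJi⟩ := ih (k p)
      refine ⟨i, le_trans hk.le_apply hi, ?_⟩
      show J ((m + q) + 1) p = J m i
      rw [hJk, hJi]
  choose y hy' using hJP
  have hdlim : ∀ m : ℕ, Filter.Tendsto (fun n => φ.toFun (τ (d n) - m) (x (d n)))
      Filter.atTop (𝓝 (y m)) := by
    intro m
    have hex : ∀ n : ℕ, ∃ i, m ≤ n → (n ≤ i ∧ d n = J m i) := by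
      intro n
      rcases le_or_gt m n with h | h
      · obtain ⟨i, hi, hJi⟩ := hshift m (n - m) n
        rw [Nat.add_sub_cancel' h] at hJi
        exact ⟨i, fun _ => ⟨hi, hJi⟩⟩
      · exact ⟨0, fun h' => absurd h' (not_le.2 h)⟩
    choose i hi using hex
    have hitop : Filter.Tendsto i Filter.atTop Filter.atTop := by
      apply tendsto_atTop_mono' Filter.atTop ?_ tendsto_id
      filter_upwards [Filter.eventually_ge_atTop m] with n hn
      exact (hi n hn).1
    refine Filter.Tendsto.congr' ?_ ((hy' m).comp hitop)
    filter_upwards [Filter.eventually_ge_atTop m] with n hn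
    show φ.toFun (τ (J m (i n)) - m) (x (J m (i n))) = φ.toFun (τ (d n) - m) (x (d n))
    rw [(hi n hn).2]
  have hτd : Filter.Tendsto (fun n => τ (d n)) Filter.atTop Filter.atTop :=
    hτ.comp hdmono.tendsto_atTop
  -- Consistency of the limits
  have hcons : ∀ m : ℕ, y m = φ.toFun 1 (y (m + 1)) := by
    intro m
    have h1 : Filter.Tendsto
        (fun n => φ.toFun 1 (φ.toFun (τ (d n) - ((m : ℕ) + 1 : ℕ)) (x (d n))))
        Filter.atTop (𝓝 (φ.toFun 1 (y (m + 1)))) :=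
      ((φ.cont_fixed_time zero_le_one).tendsto _).comp (hdlim (m + 1))
    refine tendsto_nhds_unique (hdlim m) (Filter.Tendsto.congr' ?_ h1)
    filter_upwards [hτd.eventually_ge_atTop ((m : ℝ) + 1)] with n hn
    have h2 : (0:ℝ) ≤ τ (d n) - ((m + 1 : ℕ) : ℝ) := by push_cast; linarith
    rw [← φ.map_add 1 _ zero_le_one h2]
    congr 1
    push_cast
    ring
  have hiter : ∀ p m : ℕ, y m = φ.toFun p (y (m + p)) := by
    intro p
    induction p with
    | zero => intro m; simp [φ.map_zero]
    | succ p ih =>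
      intro m
      rw [hcons m, ih (m + 1),
        ← φ.map_add 1 p zero_le_one (by positivity),
        show m + 1 + p = m + (p + 1) by ring]
      congr 1
      push_cast
      ring
  -- The limit trajectory
  set γ : ℝ → X := fun t => φ.toFun (t + ⌈-t⌉₊) (y ⌈-t⌉₊) with hγ
  have hγdef : ∀ (t : ℝ) (m : ℕ), -t ≤ m → γ t = φ.toFun (t + m) (y m) := by
    intro t m hm
    have h0 : ⌈-t⌉₊ ≤ m := Nat.ceil_le.2 hm
    have hle : -t ≤ (⌈-t⌉₊ : ℝ) := Nat.le_ceil _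
    obtain ⟨p, rfl⟩ := Nat.exists_eq_add_of_le h0
    show φ.toFun (t + ⌈-t⌉₊) (y ⌈-t⌉₊) = φ.toFun (t + (⌈-t⌉₊ + p : ℕ)) (y (⌈-t⌉₊ + p))
    rw [hiter p ⌈-t⌉₊, ← φ.map_add (t + ⌈-t⌉₊) p (by linarith) (Nat.cast_nonneg p)]
    congr 1
    push_cast
    ring
  have htraj : φ.IsCompleteTraj γ := by
    intro s t hst
    have hm : -s ≤ (⌈-s⌉₊ : ℝ) := Nat.le_ceil _
    rw [hγdef t ⌈-s⌉₊ (by linarith), hγdef s ⌈-s⌉₊ (by linarith),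
      ← φ.map_add (t - s) (s + ⌈-s⌉₊) (by linarith) (by linarith)]
    congr 1
    ring
  refine ⟨d, hdmono, γ, htraj, ?_⟩
  intro a b hab
  rw [Metric.tendstoUniformlyOn_iff]
  intro ε hε
  have ham : -a ≤ (⌈-a⌉₊ : ℝ) := Nat.le_ceil _
  set m := ⌈-a⌉₊ with hm
  obtain ⟨δ, hδ, hkey⟩ := φ.unif_key (c := a + m) (d := b + m) (by linarith) (y m) hε
  filter_upwards [Metric.tendsto_nhds.1 (hdlim m) δ hδ,
    hτd.eventually_ge_atTop (m : ℝ)] with n hn1 hn2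
  intro t ht
  have h1 : γ t = φ.toFun (t + m) (y m) := hγdef t m (by linarith [ht.1])
  have h2 : φ.toFun (τ (d n) + t) (x (d n))
      = φ.toFun (t + m) (φ.toFun (τ (d n) - m) (x (d n))) := by
    rw [← φ.map_add (t + m) (τ (d n) - m) (by linarith [ht.1]) (by linarith)]
    congr 1
    ring
  rw [h1, h2, dist_comm]
  exact hkey (t + m) ⟨by linarith [ht.1], by linarith [ht.2]⟩ _ hn1
end

section
/- Let S be an asymptotically compact semiflow on a complete metric space X, and let A ⊆ X. If ⋃_{t ≥ t₀} S(t)A is bounded for some t₀ > 0, then the ω-limit set ω(A) is a nonempty compact invariant set of S, and ω(A) attracts A. -/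
open Metric Set Filter Topology Bornology

namespace Semiflow

variable {X : Type*} [MetricSpace X] (φ : Semiflow X)

lemma cont_apply (t : ℝ) (ht : 0 ≤ t) : Continuous (fun x => φ.toFun t x) := by
  have : Continuous (fun x : X => ((t, x) : ℝ × X)) := by continuity
  exact φ.continuousOn.comp_continuous this (fun x => ⟨ht, Set.mem_univ x⟩)

lemma key {A : Set X} {t₀ : ℝ} (ht₀ : 0 < t₀)
    (hac : φ.AsympCompact)
    (hbdd : IsBounded {y : X | ∃ t ≥ t₀, ∃ x ∈ A, y = φ.toFun t x})
    (x : ℕ → X) (hx : ∀ n, x n ∈ A)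
    (s : ℕ → ℝ) (hs : ∀ n, t₀ ≤ s n) (hs' : Tendsto s atTop atTop) :
    ∃ (y : X) (k : ℕ → ℕ), StrictMono k ∧
      Tendsto (fun n => φ.toFun (s (k n)) (x (k n))) atTop (𝓝 y) ∧
      y ∈ φ.omegaLimit A := by
  set B := {y : X | ∃ t ≥ t₀, ∃ x ∈ A, y = φ.toFun t x} with hB
  have hz : ∀ n, φ.toFun t₀ (x n) ∈ B := fun n => ⟨t₀, le_refl _, x n, hx n, rfl⟩
  have hEq : ∀ n, φ.toFun (s n - t₀) (φ.toFun t₀ (x n)) = φ.toFun (s n) (x n) := by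
    intro n
    have h1 : s n - t₀ + t₀ = s n := by ring
    rw [← φ.map_add _ _ (by linarith [hs n]) ht₀.le, h1]
  have hst : Tendsto (fun n => s n - t₀) atTop atTop := by
    simpa [sub_eq_add_neg] using tendsto_atTop_add_const_right atTop (-t₀) hs'
  obtain ⟨y, k, hk, hky⟩ := hac (fun n => φ.toFun t₀ (x n)) (fun n => s n - t₀)
    (fun n => sub_nonneg.mpr (hs n))
    (hbdd.subset (Set.range_subset_iff.mpr hz)) hst
    (by
      refine hbdd.subset (Set.range_subset_iff.mpr ?_)
      intro n
      rw [hEq n]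
      exact ⟨s n, hs n, x n, hx n, rfl⟩)
  have hky' : Tendsto (fun n => φ.toFun (s (k n)) (x (k n))) atTop (𝓝 y) := by
    simpa only [hEq] using hky
  exact ⟨y, k, hk, hky', ⟨fun n => x (k n), fun n => s (k n),
    fun n => hx (k n), fun n => le_trans ht₀.le (hs (k n)),
    hs'.comp hk.tendsto_atTop, hky'⟩⟩

end Semiflow

/-- If `⋃_{t ≥ t₀} S t A` is bounded for some `t₀ > 0` (and `A` is nonempty),
then `ω(A)` is a nonempty compact invariant set which attracts `A`. -/
theorem stmt1 {X : Type*} [MetricSpace X] [CompleteSpace X] (φ : Semiflow X)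
    (hac : φ.AsympCompact) (A : Set X) (hA : A.Nonempty)
    (t₀ : ℝ) (ht₀ : 0 < t₀)
    (hbdd : Bornology.IsBounded {y : X | ∃ t ≥ t₀, ∃ x ∈ A, y = φ.toFun t x}) :
    (φ.omegaLimit A).Nonempty ∧ IsCompact (φ.omegaLimit A) ∧
      φ.Invariant (φ.omegaLimit A) ∧ φ.Attracts (φ.omegaLimit A) A := by
  have hne : (φ.omegaLimit A).Nonempty := by
    obtain ⟨x₀, hx₀⟩ := hA
    obtain ⟨y, k, -, -, hy⟩ := φ.key ht₀ hac hbdd (fun _ => x₀) (fun _ => hx₀)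
      (fun n => t₀ + n) (fun n => le_add_of_nonneg_right (Nat.cast_nonneg n))
      (tendsto_atTop_add_const_left _ t₀ tendsto_natCast_atTop_atTop)
    exact ⟨y, hy⟩
  have hcpt : IsCompact (φ.omegaLimit A) := by
    refine IsSeqCompact.isCompact ?_
    intro y hy
    have hsel : ∀ m : ℕ, ∃ (u : X) (τ : ℝ), u ∈ A ∧ t₀ + m ≤ τ ∧
        dist (φ.toFun τ u) (y m) < 1/(m+1) := by
      intro m
      obtain ⟨u, τ, hu, hτ0, hτ, hconv⟩ := hy m
      have h1 : ∀ᶠ n in atTop, t₀ + m ≤ τ n := hτ.eventually (eventually_ge_atTop _)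
      have h2 : ∀ᶠ n in atTop, dist (φ.toFun (τ n) (u n)) (y m) < 1/(m+1) :=
        Metric.tendsto_nhds.mp hconv (1/(m+1)) (by positivity)
      obtain ⟨n, hn1, hn2⟩ := (h1.and h2).exists
      exact ⟨u n, τ n, hu n, hn1, hn2⟩
    choose u τ hu hτ hd using hsel
    have hτ' : ∀ m, t₀ ≤ τ m :=
      fun m => le_trans (le_add_of_nonneg_right (Nat.cast_nonneg m)) (hτ m)
    have hτT : Tendsto τ atTop atTop :=
      tendsto_atTop_mono hτ
        (tendsto_atTop_add_const_left _ t₀ tendsto_natCast_atTop_atTop)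
    obtain ⟨z, k, hk, hconv2, hz⟩ := φ.key ht₀ hac hbdd u hu τ hτ' hτT
    refine ⟨z, hz, k, hk, ?_⟩
    have hd0 : Tendsto (fun m => dist (y (k m)) z) atTop (𝓝 0) := by
      have hb : ∀ m, dist (y (k m)) z ≤
          1/(m+1) + dist (φ.toFun (τ (k m)) (u (k m))) z := by
        intro m
        have htri := dist_triangle (y (k m)) (φ.toFun (τ (k m)) (u (k m))) z
        have h3 : dist (y (k m)) (φ.toFun (τ (k m)) (u (k m))) ≤ 1/(m+1) := by
          rw [dist_comm]
          refine le_trans (hd (k m)).le ?_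
          have hkm : (m : ℝ) ≤ (k m : ℝ) := by exact_mod_cast hk.le_apply
          gcongr
        linarith
      have hlim : Tendsto (fun m : ℕ =>
          1/((m:ℝ)+1) + dist (φ.toFun (τ (k m)) (u (k m))) z) atTop (𝓝 0) := by
        have h4 : Tendsto (fun m : ℕ => 1/((m:ℝ)+1)) atTop (𝓝 0) :=
          tendsto_one_div_add_atTop_nhds_zero_nat
        simpa using h4.add (tendsto_iff_dist_tendsto_zero.mp hconv2)
      exact squeeze_zero (fun m => dist_nonneg) hb hlim
    exact tendsto_iff_dist_tendsto_zero.mpr hd0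
  have hinv : φ.Invariant (φ.omegaLimit A) := by
    intro t ht
    apply Set.Subset.antisymm
    · rintro _ ⟨y, ⟨w, τ, hw, hτ0, hτ, hconv⟩, rfl⟩
      refine ⟨w, fun n => t + τ n, hw, fun n => add_nonneg ht (hτ0 n),
        tendsto_atTop_add_const_left _ t hτ, ?_⟩
      have heq : ∀ n, φ.toFun (t + τ n) (w n) = φ.toFun t (φ.toFun (τ n) (w n)) :=
        fun n => φ.map_add t (τ n) ht (hτ0 n) (w n)
      simp only [heq]
      exact ((φ.cont_apply t ht).tendsto y).comp hconv
    · intro y hy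
      obtain ⟨w, τ, hw, hτ0, hτ, hconv⟩ := hy
      obtain ⟨N, hN⟩ := eventually_atTop.mp (hτ.eventually (eventually_ge_atTop (t + t₀)))
      set w' : ℕ → X := fun m => w (m + N) with hw'def
      set τ' : ℕ → ℝ := fun m => τ (m + N) - t with hτ'def
      have hτ'₁ : ∀ m, t₀ ≤ τ' m := by
        intro m
        have := hN (m + N) (Nat.le_add_left N m)
        simp only [hτ'def]
        linarith
      have hτ'T : Tendsto τ' atTop atTop := by
        have h0 : Tendsto (fun m => τ (m + N)) atTop atTop :=
          hτ.comp (tendsto_add_atTop_nat N)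
        simpa [hτ'def, sub_eq_add_neg] using tendsto_atTop_add_const_right atTop (-t) h0
      obtain ⟨z, k, hk, hconv2, hz⟩ :=
        φ.key ht₀ hac hbdd w' (fun m => hw _) τ' hτ'₁ hτ'T
      refine ⟨z, hz, ?_⟩
      have hlim1 : Tendsto (fun m => φ.toFun t (φ.toFun (τ' (k m)) (w' (k m))))
          atTop (𝓝 (φ.toFun t z)) := ((φ.cont_apply t ht).tendsto z).comp hconv2
      have heq : ∀ m, φ.toFun t (φ.toFun (τ' (k m)) (w' (k m)))
          = φ.toFun (τ (k m + N)) (w (k m + N)) := by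
        intro m
        rw [← φ.map_add t (τ' (k m)) ht (le_trans ht₀.le (hτ'₁ (k m)))]
        have h5 : t + τ' (k m) = τ (k m + N) := by simp only [hτ'def]; ring
        rw [h5]
      have hlim2 : Tendsto (fun m => φ.toFun (τ (k m + N)) (w (k m + N)))
          atTop (𝓝 y) :=
        hconv.comp ((tendsto_add_atTop_nat N).comp hk.tendsto_atTop)
      exact tendsto_nhds_unique (by simpa only [heq] using hlim1) hlim2
  have hatt : φ.Attracts (φ.omegaLimit A) A := by
    by_contra hcon
    simp only [Semiflow.Attracts] at hcon
    push_neg at hcon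
    obtain ⟨ε, hε, hcon⟩ := hcon
    have hsel : ∀ n : ℕ, ∃ (τ : ℝ), τ > t₀ + n ∧ ∃ u ∈ A,
        ε ≤ infDist (φ.toFun τ u) (φ.omegaLimit A) := by
      intro n
      exact hcon (t₀ + n) (add_pos_of_pos_of_nonneg ht₀ (Nat.cast_nonneg n))
    choose τ hτ u hu hdist using hsel
    obtain ⟨z, k, hk, hconv2, hz⟩ := φ.key ht₀ hac hbdd u hu τ
      (fun n => le_trans (le_add_of_nonneg_right (Nat.cast_nonneg n)) (hτ n).le)
      (tendsto_atTop_mono (fun n => (hτ n).le)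
        (tendsto_atTop_add_const_left _ t₀ tendsto_natCast_atTop_atTop))
    have h1 : Tendsto (fun m => infDist (φ.toFun (τ (k m)) (u (k m)))
        (φ.omegaLimit A)) atTop (𝓝 0) := by
      have h2 := ((continuous_infDist_pt (φ.omegaLimit A)).tendsto z).comp hconv2
      rw [infDist_zero_of_mem hz] at h2
      exact h2
    have h3 : ε ≤ 0 := ge_of_tendsto h1 (Eventually.of_forall fun m => hdist (k m))
    linarith
  exact ⟨hne, hcpt, hinv, hatt⟩
end

section
/- Let S be an asymptotically compact semiflow on a complete metric space X and let 𝒜 be an attractor of S with attraction basin Ω = Ω(𝒜). Then for every x ∈ Ω there exists ε > 0 such that 𝒜 attracts the ball B(x,ε); in particular Ω is an open subset of X. -/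
open Metric Set Filter Topology Bornology

/-- For every `x` in the attraction basin `Ω` of an attractor `𝒜` there is
`ε > 0` such that `𝒜` attracts `B(x,ε)`; in particular `Ω` is open. -/
theorem stmt3 {X : Type*} [MetricSpace X] [CompleteSpace X] (φ : Semiflow X)
    (hac : φ.AsympCompact) (𝒜 : Set X) (h𝒜 : φ.IsAttractor 𝒜) :
    (∀ x ∈ φ.basin 𝒜, ∃ ε > (0:ℝ), φ.Attracts 𝒜 (Metric.ball x ε)) ∧
      IsOpen (φ.basin 𝒜) := by
  have main : ∀ x ∈ φ.basin 𝒜, ∃ ε > (0:ℝ), φ.Attracts 𝒜 (Metric.ball x ε) := by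
    rcases Set.eq_empty_or_nonempty 𝒜 with hemp | hne
    · intro x _
      refine ⟨1, one_pos, fun ε hε => ⟨1, one_pos, fun t _ y _ => ?_⟩⟩
      simp [hemp, Metric.infDist_empty, hε]
    · obtain ⟨hcomp, hinv, U, hAU, hattr⟩ := h𝒜
      intro x hx
      obtain ⟨δ, δpos, hδ⟩ :=
        hcomp.exists_thickening_subset_open isOpen_interior hAU
      have hx' : Tendsto (fun t : ℝ => infDist (φ.toFun t x) 𝒜) atTop (𝓝 0) := hx
      have hev : ∀ᶠ t : ℝ in atTop, infDist (φ.toFun t x) 𝒜 < δ :=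
        hx'.eventually (eventually_lt_nhds δpos)
      obtain ⟨N, hN⟩ := eventually_atTop.1 hev
      set t₀ : ℝ := max N 1 with ht₀def
      have ht₀pos : (0:ℝ) < t₀ := lt_of_lt_of_le one_pos (le_max_right _ _)
      have ht₀ : infDist (φ.toFun t₀ x) 𝒜 < δ := hN t₀ (le_max_left _ _)
      -- continuity of y ↦ S t₀ y at x
      have hmem : (Set.Ici (0:ℝ) ×ˢ (Set.univ : Set X)) ∈ 𝓝 (t₀, x) :=
        prod_mem_nhds (Ici_mem_nhds ht₀pos) Filter.univ_mem
      have hCA : ContinuousAt (fun p : ℝ × X => φ.toFun p.1 p.2) (t₀, x) :=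
        (φ.continuousOn (t₀, x) ⟨le_of_lt ht₀pos, Set.mem_univ _⟩).continuousAt hmem
      have hc : ContinuousAt (fun y : X => φ.toFun t₀ y) x :=
        hCA.comp ((Continuous.prodMk_right t₀).continuousAt)
      have hthick : φ.toFun t₀ x ∈ Metric.thickening δ 𝒜 := by
        rw [Metric.mem_thickening_iff]
        exact (Metric.infDist_lt_iff hne).1 ht₀
      have hpre : (fun y : X => φ.toFun t₀ y) ⁻¹' Metric.thickening δ 𝒜 ∈ 𝓝 x :=
        hc.preimage_mem_nhds (Metric.isOpen_thickening.mem_nhds hthick)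
      obtain ⟨ε, εpos, hball⟩ := Metric.mem_nhds_iff.1 hpre
      refine ⟨ε, εpos, fun ε' hε' => ?_⟩
      obtain ⟨T, hT, hTattr⟩ := hattr ε' hε'
      refine ⟨T + t₀, by linarith, fun t ht y hy => ?_⟩
      have hyU : φ.toFun t₀ y ∈ U :=
        interior_subset (hδ (hball hy))
      have heq : φ.toFun t y = φ.toFun (t - t₀) (φ.toFun t₀ y) := by
        rw [← φ.map_add (t - t₀) t₀ (by linarith) (le_of_lt ht₀pos), sub_add_cancel]
      rw [heq]
      exact hTattr (t - t₀) (by linarith) _ hyU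
  refine ⟨main, ?_⟩
  rw [isOpen_iff_mem_nhds]
  intro x hx
  obtain ⟨ε, εpos, hatt⟩ := main x hx
  filter_upwards [Metric.ball_mem_nhds x εpos] with y hy
  rw [Semiflow.basin, Set.mem_setOf_eq, Metric.tendsto_atTop]
  intro ε' hε'
  obtain ⟨T, hT, h⟩ := hatt ε' hε'
  refine ⟨T + 1, fun t ht => ?_⟩
  rw [Real.dist_eq, sub_zero, abs_of_nonneg Metric.infDist_nonneg]
  exact h t (by linarith) y hy
end

section
/- Let S be an asymptotically compact semiflow on a complete metric space X and let 𝒜 be an attractor of S with attraction basin Ω = Ω(𝒜). Then 𝒜 attracts every compact subset K of Ω. -/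
open Metric Set Filter Topology Bornology

/-- An attractor `𝒜` attracts every compact subset of its attraction basin. -/
theorem stmt4 {X : Type*} [MetricSpace X] [CompleteSpace X] (φ : Semiflow X)
    (hac : φ.AsympCompact) (𝒜 : Set X) (h𝒜 : φ.IsAttractor 𝒜)
    (K : Set X) (hK : IsCompact K) (hKΩ : K ⊆ φ.basin 𝒜) :
    φ.Attracts 𝒜 K := by
  obtain ⟨hcomp, hinv, U, hU, hattr⟩ := h𝒜
  rcases Set.eq_empty_or_nonempty 𝒜 with hemp | hne
  · intro ε hε
    exact ⟨1, one_pos, fun t _ x _ => by simp [hemp, Metric.infDist_empty, hε]⟩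
  -- choose η > 0 with thickening η 𝒜 ⊆ interior U
  obtain ⟨η, hη, hth⟩ := hcomp.exists_thickening_subset_open isOpen_interior hU
  -- continuity of the time-s map for s ≥ 0
  have hcont : ∀ s : ℝ, 0 ≤ s → Continuous (fun y => φ.toFun s y) := by
    intro s hs
    have h1 : Continuous (fun y : X => ((s, y) : ℝ × X)) := by continuity
    have := φ.continuousOn.comp
      (h1.continuousOn : ContinuousOn _ (Set.univ : Set X))
      (fun y _ => ⟨hs, Set.mem_univ y⟩)
    exact continuousOn_univ.mp this
  -- each point of K eventually enters interior U
  have key : ∀ x : X, ∃ s : ℝ, 0 < s ∧ (x ∈ K → φ.toFun s x ∈ interior U) := by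
    intro x
    by_cases hx : x ∈ K
    · have hb := hKΩ hx
      have h1 : ∀ᶠ t in atTop, Metric.infDist (φ.toFun t x) 𝒜 < η :=
        hb (Iio_mem_nhds hη)
      have h2 : ∀ᶠ t : ℝ in atTop, 0 < t := eventually_gt_atTop 0
      obtain ⟨s, hs1, hs2⟩ := (h1.and h2).exists
      refine ⟨s, hs2, fun _ => hth ?_⟩
      exact (Metric.mem_thickening_iff_infDist_lt hne).2 hs1
    · exact ⟨1, one_pos, fun h => absurd h hx⟩
  choose s hspos hsmem using key
  -- open neighborhoods
  set W : X → Set X := fun x => (fun y => φ.toFun (s x) y) ⁻¹' interior U with hW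
  have hWopen : ∀ x, IsOpen (W x) := fun x =>
    isOpen_interior.preimage (hcont (s x) (hspos x).le)
  obtain ⟨F, _, hFcov⟩ := hK.elim_nhds_subcover W
    (fun x hx => (hWopen x).mem_nhds (hsmem x hx))
  -- bound on the times
  have hbdd : BddAbove (s '' (F : Set X)) := (F.finite_toSet.image s).bddAbove
  obtain ⟨M, hM⟩ := hbdd
  intro ε hε
  obtain ⟨Tε, hTε, hTattr⟩ := hattr ε hε
  refine ⟨Tε + max M 0 + 1, by positivity, fun t ht x hx => ?_⟩
  obtain ⟨x₀, hx₀F, hx₀⟩ := Set.mem_iUnion₂.1 (hFcov hx)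
  have hsM : s x₀ ≤ M := hM ⟨x₀, hx₀F, rfl⟩
  have hsle : s x₀ ≤ max M 0 := hsM.trans (le_max_left _ _)
  have ht' : Tε < t - s x₀ := by linarith
  have htnn : (0:ℝ) ≤ t - s x₀ := by
    have := hTε; linarith
  have heq : φ.toFun t x = φ.toFun (t - s x₀) (φ.toFun (s x₀) x) := by
    have := φ.map_add (t - s x₀) (s x₀) htnn (hspos x₀).le x
    simpa using this
  have hx₀' : φ.toFun (s x₀) x ∈ interior U := hx₀
  rw [heq]
  exact hTattr _ ht' _ (interior_subset hx₀')
end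

section
/- Let S be an asymptotically compact semiflow on a complete metric space X and let 𝒜 be an attractor of S. Then 𝒜 is Lyapunov stable: for every ε > 0 there exists δ > 0 such that S(t)B(𝒜,δ) ⊆ B(𝒜,ε) for all t ≥ 0. -/
open Metric Set Filter Topology Bornology

/-- An attractor is Lyapunov stable: for every `ε > 0` there is `δ > 0`
such that `S t (B(𝒜,δ)) ⊆ B(𝒜,ε)` for all `t ≥ 0`. -/
theorem stmt5 {X : Type*} [MetricSpace X] [CompleteSpace X] (φ : Semiflow X)
    (hac : φ.AsympCompact) (𝒜 : Set X) (h𝒜 : φ.IsAttractor 𝒜) :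
    ∀ ε > (0:ℝ), ∃ δ > (0:ℝ), ∀ t ≥ (0:ℝ), ∀ x : X,
      Metric.infDist x 𝒜 < δ → Metric.infDist (φ.toFun t x) 𝒜 < ε := by
  intro ε hε
  rcases Set.eq_empty_or_nonempty 𝒜 with h𝒜e | h𝒜ne
  · exact ⟨ε, hε, fun t _ x _ => by simp [h𝒜e, Metric.infDist_empty, hε]⟩
  by_contra hcon
  push_neg at hcon
  choose t ht0 x hx hge using fun n : ℕ =>
    hcon (1 / (n + 1)) (by positivity)
  obtain ⟨hcomp, hinv, U, hU, hatt⟩ := h𝒜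
  obtain ⟨r, hr, hthick⟩ := hcomp.exists_thickening_subset_open isOpen_interior hU
  obtain ⟨T, hT, hattT⟩ := hatt ε hε
  obtain ⟨N, hN⟩ := exists_nat_one_div_lt hr
  have hxU : ∀ n, N ≤ n → x n ∈ U := by
    intro n hn
    have h1 : (1 : ℝ) / (n + 1) ≤ 1 / (N + 1) := by
      apply one_div_le_one_div_of_le (by positivity)
      have : (N:ℝ) ≤ n := Nat.cast_le.2 hn
      linarith
    have : Metric.infDist (x n) 𝒜 < r := lt_of_lt_of_le (hx n) (h1.trans hN.le)
    have : x n ∈ Metric.thickening r 𝒜 :=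
      (Metric.mem_thickening_iff_infDist_lt h𝒜ne).2 this
    exact interior_subset (hthick this)
  by_cases hcase : ∃ n, N ≤ n ∧ T < t n
  · obtain ⟨n, hn, hTn⟩ := hcase
    exact absurd (hattT (t n) hTn (x n) (hxU n hn)) (not_lt.2 (hge n))
  · push_neg at hcase
    -- all times t n (for n ≥ N) lie in [0, T]
    have hmem : ∀ m : ℕ, t (m + N) ∈ Set.Icc (0 : ℝ) T :=
      fun m => ⟨ht0 _, hcase _ (Nat.le_add_left N m)⟩
    obtain ⟨τ, hτ, k, hk, htk⟩ := isCompact_Icc.tendsto_subseq hmem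
    -- choose points a n ∈ 𝒜 close to x n
    have hxa : ∀ n : ℕ, ∃ a ∈ 𝒜, dist (x n) a < 2 / (n + 1) := by
      intro n
      have : Metric.infDist (x n) 𝒜 < 2 / (n + 1) := by
        have := hx n
        have hpos : (0:ℝ) < (n:ℝ) + 1 := by positivity
        have h2 : (1 : ℝ) / (n + 1) < 2 / (n + 1) :=
          (div_lt_div_iff_of_pos_right hpos).2 (by norm_num)
        linarith
      exact (Metric.infDist_lt_iff h𝒜ne).1 this
    choose a ha hda using hxa
    obtain ⟨b, hb, j, hj, haj⟩ :=
      hcomp.tendsto_subseq (x := fun m => a (k m + N)) (fun m => ha _)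
    set i : ℕ → ℕ := fun m => k (j m) + N with hi
    have hik : ∀ m, m ≤ i m := by
      intro m
      calc m ≤ j m := hj.le_apply
        _ ≤ k (j m) := hk.le_apply
        _ ≤ i m := Nat.le_add_right _ _
    have hti : Filter.Tendsto (fun m => t (i m)) Filter.atTop (nhds τ) :=
      htk.comp hj.tendsto_atTop
    have hai : Filter.Tendsto (fun m => a (i m)) Filter.atTop (nhds b) := haj
    have hdxa : Filter.Tendsto (fun m => dist (x (i m)) (a (i m)))
        Filter.atTop (nhds 0) := by
      have hle : ∀ m : ℕ, dist (x (i m)) (a (i m)) ≤ 2 / (m + 1) := by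
        intro m
        refine (hda (i m)).le.trans ?_
        apply div_le_div_of_nonneg_left (by norm_num) (by positivity)
        have : (m:ℝ) ≤ i m := Nat.cast_le.2 (hik m)
        linarith
      have h0 : Filter.Tendsto (fun m : ℕ => 2 / ((m : ℝ) + 1))
          Filter.atTop (nhds 0) := by
        apply Filter.Tendsto.div_atTop tendsto_const_nhds
        exact Filter.tendsto_atTop_add_const_right _ _ tendsto_natCast_atTop_atTop
      exact squeeze_zero (fun m => dist_nonneg) hle h0
    have hxi : Filter.Tendsto (fun m => x (i m)) Filter.atTop (nhds b) := by
      rw [tendsto_iff_dist_tendsto_zero]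
      apply squeeze_zero (fun m => dist_nonneg)
        (fun m => dist_triangle (x (i m)) (a (i m)) b)
      have := hdxa.add (tendsto_iff_dist_tendsto_zero.1 hai)
      simpa using this
    -- pair convergence within the domain of continuity
    have hpair : Filter.Tendsto (fun m => ((t (i m), x (i m)) : ℝ × X))
        Filter.atTop (nhdsWithin (τ, b) (Set.Ici (0:ℝ) ×ˢ Set.univ)) := by
      apply tendsto_nhdsWithin_of_tendsto_nhds_of_eventually_within
      · exact hti.prodMk_nhds hxi
      · exact Filter.Eventually.of_forall fun m => ⟨ht0 _, Set.mem_univ _⟩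
    have hcts : Filter.Tendsto (fun m => φ.toFun (t (i m)) (x (i m)))
        Filter.atTop (nhds (φ.toFun τ b)) :=
      (φ.continuousOn (τ, b) ⟨hτ.1, Set.mem_univ _⟩).tendsto.comp hpair
    have hτb : φ.toFun τ b ∈ 𝒜 := by
      rw [← hinv τ hτ.1]; exact Set.mem_image_of_mem _ hb
    have hlim : Filter.Tendsto
        (fun m => Metric.infDist (φ.toFun (t (i m)) (x (i m))) 𝒜)
        Filter.atTop (nhds 0) := by
      have := ((Metric.continuous_infDist_pt 𝒜).tendsto _).comp hcts
      rwa [Metric.infDist_zero_of_mem hτb] at this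
    have : ε ≤ 0 := ge_of_tendsto hlim (Filter.Eventually.of_forall fun m => hge (i m))
    linarith
end

section
/- (Existence of attractors) Let S be an asymptotically compact semiflow on a complete metric space X. Assume there is a bounded closed subset A ⊆ X which attracts a neighborhood of itself. Then S has an attractor 𝒜 contained in A. -/
open Metric Set Filter Topology Bornology

section Stmt6Aux

open Metric Set Filter Topology Bornology

private lemma stmt6_cont {X : Type*} [MetricSpace X] (φ : Semiflow X) {t : ℝ} (ht : 0 ≤ t) :
    Continuous (fun z => φ.toFun t z) := by
  rw [← continuousOn_univ]
  exact φ.continuousOn.comp ((continuous_const.prodMk continuous_id).continuousOn)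
    (fun z _ => Set.mem_prod.2 ⟨ht, Set.mem_univ z⟩)

/-- Key lemma: any sequence of orbit points from `U` with times tending to infinity has a
subsequence converging to a point of the omega limit set of `U`. -/
private lemma stmt6_L1 {X : Type*} [MetricSpace X] (φ : Semiflow X) (hac : φ.AsympCompact)
    (A U : Set X) (hbdd : IsBounded A) (hAne : A.Nonempty) (hAU : φ.Attracts A U)
    (x : ℕ → X) (hx : ∀ n, x n ∈ U) (t : ℕ → ℝ) (ht0 : ∀ n, 0 ≤ t n)
    (ht : Tendsto t atTop atTop) :
    ∃ y ∈ φ.omegaLimit U, ∃ k : ℕ → ℕ, StrictMono k ∧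
      Tendsto (fun n => φ.toFun (t (k n)) (x (k n))) atTop (𝓝 y) := by
  obtain ⟨T₁, hT₁pos, hT₁⟩ := hAU 1 one_pos
  set τ : ℝ := T₁ + 1 with hτdef
  have hτT : τ > T₁ := by simp [hτdef]
  have hτ0 : (0:ℝ) ≤ τ := by linarith
  obtain ⟨k₀, hk₀, hk₀t⟩ := Filter.extraction_forall_of_eventually
    (P := fun n m => t m > τ + n) (fun n => ht.eventually_gt_atTop (τ + n))
  set x' : ℕ → X := fun n => φ.toFun τ (x (k₀ n)) with hx'def
  set s : ℕ → ℝ := fun n => t (k₀ n) - τ with hsdef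
  have hsn : ∀ n : ℕ, (n:ℝ) ≤ s n := fun n => by
    have := hk₀t n; simp only [hsdef]; linarith
  have hs0 : ∀ n, 0 ≤ s n := fun n => le_trans (Nat.cast_nonneg n) (hsn n)
  have hstend : Tendsto s atTop atTop := tendsto_atTop_mono hsn tendsto_natCast_atTop_atTop
  have hx'b : IsBounded (Set.range x') := by
    apply (hbdd.thickening (δ := 1)).subset
    rintro _ ⟨n, rfl⟩
    exact (Metric.mem_thickening_iff_infDist_lt hAne).2 (hT₁ τ hτT _ (hx _))
  have himg : ∀ n, φ.toFun (s n) (x' n) = φ.toFun (t (k₀ n)) (x (k₀ n)) := by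
    intro n
    rw [hx'def, ← φ.map_add (s n) τ (hs0 n) hτ0]
    congr 1
    simp [hsdef]
  have himgb : IsBounded (Set.range fun n => φ.toFun (s n) (x' n)) := by
    apply (hbdd.thickening (δ := 1)).subset
    rintro _ ⟨n, rfl⟩
    show φ.toFun (s n) (x' n) ∈ thickening 1 A
    rw [himg n]
    refine (Metric.mem_thickening_iff_infDist_lt hAne).2 (hT₁ _ ?_ _ (hx _))
    have := hk₀t n
    have hn0 : (0:ℝ) ≤ n := Nat.cast_nonneg n
    linarith
  obtain ⟨y, k₁, hk₁, hk₁t⟩ := hac x' s hs0 hx'b hstend himgb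
  have hconv : Tendsto (fun n => φ.toFun (t (k₀ (k₁ n))) (x (k₀ (k₁ n)))) atTop (𝓝 y) :=
    hk₁t.congr (fun n => himg (k₁ n))
  refine ⟨y, ⟨fun n => x (k₀ (k₁ n)), fun n => t (k₀ (k₁ n)), fun n => hx _,
    fun n => ht0 _, ht.comp ((hk₀.comp hk₁).tendsto_atTop), hconv⟩,
    k₀ ∘ k₁, hk₀.comp hk₁, hconv⟩

private lemma stmt6_sub {X : Type*} [MetricSpace X] (φ : Semiflow X)
    (A U : Set X) (hAne : A.Nonempty) (hcl : IsClosed A) (hAU : φ.Attracts A U) :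
    φ.omegaLimit U ⊆ A := by
  rintro y ⟨x, t, hxU, ht0, ht, hconv⟩
  rw [hcl.mem_iff_infDist_zero hAne]
  have h1 : Tendsto (fun n => infDist (φ.toFun (t n) (x n)) A) atTop (𝓝 (infDist y A)) :=
    ((Metric.continuous_infDist_pt A).continuousAt).tendsto.comp hconv
  refine le_antisymm (le_of_forall_pos_le_add fun ε hε => ?_) Metric.infDist_nonneg
  obtain ⟨T, hT, hTd⟩ := hAU ε hε
  have h2 : ∀ᶠ n in atTop, infDist (φ.toFun (t n) (x n)) A ≤ 0 + ε := by
    filter_upwards [ht.eventually_gt_atTop T] with n hn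
    simpa using (hTd (t n) hn (x n) (hxU n)).le
  exact le_of_tendsto h1 h2

end Stmt6Aux

/-- Existence of attractors: If a nonempty bounded closed set `A` attracts
a neighborhood of itself, then the semiflow has an attractor contained in `A`. -/
theorem stmt6 {X : Type*} [MetricSpace X] [CompleteSpace X] (φ : Semiflow X)
    (hac : φ.AsympCompact) (A : Set X) (hA : A.Nonempty)
    (hbdd : Bornology.IsBounded A) (hcl : IsClosed A)
    (hattr : ∃ U : Set X, A ⊆ interior U ∧ φ.Attracts A U) :
    ∃ 𝒜 : Set X, 𝒜.Nonempty ∧ 𝒜 ⊆ A ∧ φ.IsAttractor 𝒜 := by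
  obtain ⟨U, hU, hAU⟩ := hattr
  have hAUsub : A ⊆ U := hU.trans interior_subset
  set 𝒜 := φ.omegaLimit U with h𝒜
  have hsub : 𝒜 ⊆ A := stmt6_sub φ A U hA hcl hAU
  obtain ⟨a, ha⟩ := id hA
  have hne : 𝒜.Nonempty := by
    obtain ⟨y, hy, -⟩ := stmt6_L1 φ hac A U hbdd hA hAU (fun _ => a) (fun _ => hAUsub ha)
      (fun n => (n:ℝ)) (fun n => Nat.cast_nonneg n) tendsto_natCast_atTop_atTop
    exact ⟨y, hy⟩
  have hcomp : IsCompact 𝒜 := by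
    apply IsSeqCompact.isCompact
    intro y hy
    have hz : ∀ m : ℕ, ∃ (am : X) (sm : ℝ), am ∈ U ∧ (m:ℝ) ≤ sm ∧ 0 ≤ sm ∧
        dist (φ.toFun sm am) (y m) < 1/(m+1) := by
      intro m
      obtain ⟨x, t, hxU, ht0, ht, hconv⟩ := hy m
      have h1 : ∀ᶠ n in atTop, (m:ℝ) ≤ t n := ht.eventually_ge_atTop _
      have h2 : ∀ᶠ n in atTop, dist (φ.toFun (t n) (x n)) (y m) < 1/(m+1) :=
        (Metric.tendsto_nhds.1 hconv) _ (by positivity)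
      obtain ⟨n, hn1, hn2⟩ := (h1.and h2).exists
      exact ⟨x n, t n, hxU n, hn1, ht0 n, hn2⟩
    choose a s haU hms hs0 hdist using hz
    have hstend : Tendsto s atTop atTop := tendsto_atTop_mono hms tendsto_natCast_atTop_atTop
    obtain ⟨z, hz𝒜, k, hk, hkt⟩ := stmt6_L1 φ hac A U hbdd hA hAU a haU s hs0 hstend
    refine ⟨z, hz𝒜, k, hk, ?_⟩
    rw [tendsto_iff_dist_tendsto_zero]
    have hbound : ∀ n, dist (y (k n)) z ≤
        1/(n+1) + dist (φ.toFun (s (k n)) (a (k n))) z := by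
      intro n
      have h3 : dist (y (k n)) z ≤ dist (y (k n)) (φ.toFun (s (k n)) (a (k n))) +
          dist (φ.toFun (s (k n)) (a (k n))) z := dist_triangle _ _ _
      have h4 : dist (y (k n)) (φ.toFun (s (k n)) (a (k n))) < 1/(k n + 1) := by
        rw [dist_comm]; exact hdist (k n)
      have h5 : (1:ℝ)/(k n + 1) ≤ 1/(n + 1) := by
        apply one_div_le_one_div_of_le (by positivity)
        have hkk : (n:ℝ) ≤ k n := Nat.cast_le.2 hk.le_apply
        linarith
      linarith
    have hlim : Tendsto (fun n : ℕ => 1/((n:ℝ)+1) +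
        dist (φ.toFun (s (k n)) (a (k n))) z) atTop (𝓝 0) := by
      have := tendsto_one_div_add_atTop_nhds_zero_nat.add
        ((tendsto_iff_dist_tendsto_zero.1 hkt))
      simpa using this
    exact squeeze_zero (fun n => dist_nonneg) hbound hlim
  have hinv : φ.Invariant 𝒜 := by
    intro t ht
    apply Set.Subset.antisymm
    · rintro _ ⟨y, ⟨x, r, hxU, hr0, hr, hconv⟩, rfl⟩
      refine ⟨x, fun n => t + r n, hxU, fun n => add_nonneg ht (hr0 n),
        tendsto_atTop_add_const_left _ _ hr, ?_⟩
      have h1 : Tendsto (fun n => φ.toFun t (φ.toFun (r n) (x n))) atTop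
          (𝓝 (φ.toFun t y)) := ((stmt6_cont φ ht).continuousAt).tendsto.comp hconv
      exact h1.congr (fun n => (φ.map_add t (r n) ht (hr0 n) (x n)).symm)
    · intro y hy
      obtain ⟨x, r, hxU, hr0, hr, hconv⟩ := hy
      set s : ℕ → ℝ := fun n => max (r n - t) 0 with hsdef
      have hs0 : ∀ n, 0 ≤ s n := fun n => le_max_right _ _
      have hstend : Tendsto s atTop atTop := by
        refine tendsto_atTop_mono (fun n => le_max_left _ _) ?_
        simpa [sub_eq_add_neg] using Filter.tendsto_atTop_add_const_right atTop (-t) hr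
      obtain ⟨z, hz, k, hk, hkt⟩ := stmt6_L1 φ hac A U hbdd hA hAU x hxU s hs0 hstend
      refine ⟨z, hz, ?_⟩
      have h1 : Tendsto (fun n => φ.toFun t (φ.toFun (s (k n)) (x (k n)))) atTop
          (𝓝 (φ.toFun t z)) := ((stmt6_cont φ ht).continuousAt).tendsto.comp hkt
      have h2 : ∀ᶠ n in atTop, φ.toFun t (φ.toFun (s (k n)) (x (k n))) =
          φ.toFun (r (k n)) (x (k n)) := by
        filter_upwards [(hr.comp hk.tendsto_atTop).eventually_ge_atTop t] with n hn
        have hn' : t ≤ r (k n) := hn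
        rw [← φ.map_add t (s (k n)) ht (hs0 _)]
        congr 1
        simp only [hsdef]
        rw [max_eq_left (by linarith : (0:ℝ) ≤ r (k n) - t)]
        ring
      have h3 : Tendsto (fun n => φ.toFun (r (k n)) (x (k n))) atTop (𝓝 y) :=
        hconv.comp hk.tendsto_atTop
      exact tendsto_nhds_unique (h1.congr' h2) h3
  have hattr𝒜 : φ.Attracts 𝒜 U := by
    by_contra h
    simp only [Semiflow.Attracts, not_forall, not_exists, not_lt, exists_prop] at h
    obtain ⟨ε, hε, hcount⟩ := h
    have hseq : ∀ n : ℕ, ∃ (tn : ℝ) (xn : X), xn ∈ U ∧ (n:ℝ) < tn ∧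
        ε ≤ infDist (φ.toFun tn xn) 𝒜 := by
      intro n
      have := hcount ((n:ℝ)+1)
      push_neg at this
      obtain ⟨tt, htt, xx, hxx, hd⟩ := this (by positivity)
      exact ⟨tt, xx, hxx, by linarith, hd⟩
    choose t x hxU htgt hd using hseq
    have ht0 : ∀ n, 0 ≤ t n := fun n => le_of_lt (lt_of_le_of_lt (Nat.cast_nonneg n) (htgt n))
    have httend : Tendsto t atTop atTop :=
      tendsto_atTop_mono (fun n => (htgt n).le) tendsto_natCast_atTop_atTop
    obtain ⟨y, hy, k, hk, hkt⟩ := stmt6_L1 φ hac A U hbdd hA hAU x hxU t ht0 httend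
    have h1 : Tendsto (fun n => infDist (φ.toFun (t (k n)) (x (k n))) 𝒜) atTop
        (𝓝 (infDist y 𝒜)) := ((Metric.continuous_infDist_pt 𝒜).continuousAt).tendsto.comp hkt
    have h2 : ε ≤ infDist y 𝒜 := ge_of_tendsto' h1 (fun n => hd (k n))
    have h3 : infDist y 𝒜 = 0 := Metric.infDist_zero_of_mem hy
    linarith
  exact ⟨𝒜, hne, hsub, hcomp, hinv, U, hsub.trans hU, hattr𝒜⟩
end

section
/- Let S be an asymptotically compact semiflow on a complete metric space X and let 𝒜 be an attractor of S. If A ⊆ 𝒜 is an attractor of the restricted semiflow S|𝒜 on 𝒜 (i.e., A is compact, invariant, and attracts a neighborhood of itself in the subspace 𝒜), then A is an attractor of S in X. -/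
open Metric Set Filter Topology Bornology

section AuxProofs

variable {Y : Type*} [MetricSpace Y]

/-- Joint continuity of the flow along sequences. -/
lemma Semiflow.tendsto_flow (φ : Semiflow Y) {t : ℕ → ℝ} (ht : ∀ n, 0 ≤ t n)
    {x : ℕ → Y} {s : ℝ} (hs : 0 ≤ s) {a : Y}
    (h1 : Tendsto t atTop (𝓝 s)) (h2 : Tendsto x atTop (𝓝 a)) :
    Tendsto (fun n => φ.toFun (t n) (x n)) atTop (𝓝 (φ.toFun s a)) := by
  have hp : Tendsto (fun n => ((t n, x n) : ℝ × Y)) atTop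
      (𝓝[Set.Ici (0:ℝ) ×ˢ Set.univ] (s, a)) := by
    apply tendsto_nhdsWithin_of_tendsto_nhds_of_eventually_within
    · exact h1.prodMk_nhds h2
    · exact Eventually.of_forall fun n => ⟨ht n, mem_univ _⟩
  exact Filter.Tendsto.comp (φ.continuousOn (s, a) ⟨hs, mem_univ _⟩) hp

/-- Key lemma: if the orbit of `x n` stays `ε`-close to `A` on `[0, s n)` with
`s n → ∞`, then the endpoints `S (s n) (x n)` cannot stay `ε'`-far from `A`. -/
lemma Semiflow.key_s7 (φ : Semiflow Y) (hac : φ.AsympCompact)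
    {A 𝒜 U0 V : Set Y} (h𝒜c : IsClosed 𝒜) (hA𝒜 : A ⊆ 𝒜)
    (hU0 : φ.Attracts 𝒜 U0)
    (hAne : A.Nonempty) (hAb : IsBounded A)
    (hAV : φ.Attracts A (𝒜 ∩ V))
    {ε : ℝ} (hε : 0 < ε)
    (hsubV : {z | infDist z A ≤ ε} ⊆ V) (hsub0 : {z | infDist z A ≤ ε} ⊆ U0)
    {x : ℕ → Y} {s : ℕ → ℝ} (hs : Tendsto s atTop atTop)
    (horb : ∀ n, ∀ u, 0 ≤ u → u < s n → infDist (φ.toFun u (x n)) A ≤ ε)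
    {ε' : ℝ} (hε' : 0 < ε')
    (hfar : ∀ n, ε' ≤ infDist (φ.toFun (s n) (x n)) A) : False := by
  obtain ⟨T, hT0, hTatt⟩ := hAV ε' hε'
  set τ : ℝ := T + 1 with hτdef
  have hτ0 : 0 < τ := by linarith
  obtain ⟨N, hN⟩ := (tendsto_atTop.1 hs (τ + 1)).exists_forall_of_atTop
  set y : ℕ → Y := fun n => x (n + N) with hydef
  set r : ℕ → ℝ := fun n => s (n + N) - τ with hrdef
  have hrN : ∀ n : ℕ, τ + 1 ≤ s (n + N) := fun n => hN _ (Nat.le_add_left N n)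
  have hr0 : ∀ n, 0 ≤ r n := fun n => by have := hrN n; simp only [hrdef]; linarith
  have hrlt : ∀ n, r n < s (n + N) := fun n => by simp only [hrdef]; linarith
  have hrtop : Tendsto r atTop atTop := by
    have h1 : Tendsto (fun n : ℕ => s (n + N)) atTop atTop :=
      hs.comp (tendsto_add_atTop_nat N)
    simpa [hrdef, sub_eq_add_neg] using tendsto_atTop_add_const_right atTop (-τ) h1
  -- the ε-neighborhood of A is bounded
  have hNb : IsBounded {z : Y | infDist z A ≤ ε} := by
    obtain ⟨a0, ha0⟩ := id hAne
    obtain ⟨R, hR⟩ := hAb.subset_closedBall a0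
    refine (isBounded_closedBall (x := a0) (r := ε + 1 + R)).subset ?_
    intro z hz
    have hz' : infDist z A ≤ ε := hz
    obtain ⟨a, haA, hd⟩ := (infDist_lt_iff hAne).1
      (lt_of_le_of_lt hz' (lt_add_of_pos_right ε one_pos))
    have hax : dist a a0 ≤ R := hR haA
    have : dist z a0 ≤ dist z a + dist a a0 := dist_triangle _ _ _
    exact mem_closedBall.2 (by linarith)
  have hymem : ∀ n, infDist (y n) A ≤ ε := by
    intro n
    have h0 : (0:ℝ) < s (n + N) := by have := hrN n; linarith
    have := horb (n + N) 0 le_rfl h0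
    simpa [φ.map_zero, hydef] using this
  have hzmem : ∀ n, infDist (φ.toFun (r n) (y n)) A ≤ ε :=
    fun n => horb (n + N) (r n) (hr0 n) (hrlt n)
  have hyb : IsBounded (Set.range y) :=
    hNb.subset (range_subset_iff.2 fun n => hymem n)
  have hzb : IsBounded (Set.range fun n => φ.toFun (r n) (y n)) :=
    hNb.subset (range_subset_iff.2 fun n => hzmem n)
  obtain ⟨w, k, hk, hconv⟩ := hac y r hr0 hyb hrtop hzb
  have hwA : infDist w A ≤ ε :=
    le_of_tendsto (((continuous_infDist_pt A).tendsto w).comp hconv)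
      (Eventually.of_forall fun n => hzmem (k n))
  have h𝒜ne : 𝒜.Nonempty := hAne.mono hA𝒜
  have hw𝒜0 : infDist w 𝒜 = 0 := by
    have hle : ∀ ρ : ℝ, 0 < ρ → infDist w 𝒜 ≤ ρ := by
      intro ρ hρ
      obtain ⟨T', hT'0, hT'⟩ := hU0 ρ hρ
      have hev : ∀ᶠ n in atTop, infDist (φ.toFun (r (k n)) (y (k n))) 𝒜 ≤ ρ := by
        have hrk : Tendsto (fun n => r (k n)) atTop atTop :=
          hrtop.comp hk.tendsto_atTop
        filter_upwards [hrk.eventually (eventually_gt_atTop T')] with n hn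
        exact le_of_lt (hT' _ hn _ (hsub0 (hymem (k n))))
      exact le_of_tendsto (((continuous_infDist_pt 𝒜).tendsto w).comp hconv) hev
    have h0 : 0 ≤ infDist w 𝒜 := infDist_nonneg
    by_contra hne
    have hpos : 0 < infDist w 𝒜 := lt_of_le_of_ne h0 (Ne.symm hne)
    have := hle (infDist w 𝒜 / 2) (by linarith)
    linarith
  have hw𝒜 : w ∈ 𝒜 := (h𝒜c.mem_iff_infDist_zero h𝒜ne).2 hw𝒜0
  have hwV : w ∈ V := hsubV hwA
  have hatt : infDist (φ.toFun τ w) A < ε' := hTatt τ (by linarith) w ⟨hw𝒜, hwV⟩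
  have hcomp : Tendsto (fun n => φ.toFun τ (φ.toFun (r (k n)) (y (k n)))) atTop
      (𝓝 (φ.toFun τ w)) :=
    φ.tendsto_flow (fun _ => hτ0.le) hτ0.le tendsto_const_nhds hconv
  have heq : ∀ n, φ.toFun τ (φ.toFun (r n) (y n)) = φ.toFun (s (n + N)) (y n) := by
    intro n
    rw [← φ.map_add τ (r n) hτ0.le (hr0 n)]
    congr 1
    simp only [hrdef]; ring
  have hfin : ε' ≤ infDist (φ.toFun τ w) A := by
    refine ge_of_tendsto (((continuous_infDist_pt A).tendsto _).comp hcomp)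
      (Eventually.of_forall fun n => ?_)
    have := hfar (k n + N)
    show ε' ≤ infDist (φ.toFun τ (φ.toFun (r (k n)) (y (k n)))) A; rw [heq (k n)]; simpa [hydef] using this
  linarith

end AuxProofs

/-- An attractor of the restricted semiflow on an attractor `𝒜`
is an attractor of the semiflow in the whole space `X`. -/
theorem stmt7 {X : Type*} [MetricSpace X] [CompleteSpace X] (φ : Semiflow X)
    (hac : φ.AsympCompact) (𝒜 : Set X) (h𝒜 : φ.IsAttractor 𝒜)
    (A : Set X) (hA : φ.IsAttractorIn 𝒜 A) :
    φ.IsAttractor A := by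
  obtain ⟨h𝒜comp, h𝒜inv, U0, h𝒜int, h𝒜att⟩ := h𝒜
  obtain ⟨hA𝒜, hAcomp, hAinv, V, hVopen, hAsubV, hAatt⟩ := hA
  refine ⟨hAcomp, hAinv, ?_⟩
  rcases A.eq_empty_or_nonempty with hAe | hAne
  · refine ⟨univ, by simp, ?_⟩
    intro ε hε
    exact ⟨1, one_pos, fun t ht x hx => by simp [hAe, Metric.infDist_empty, hε]⟩
  -- choose ε with the closed ε-neighborhood of A inside V ∩ interior U0
  have hAopen : A ⊆ V ∩ interior U0 :=
    subset_inter hAsubV (fun a ha => h𝒜int (hA𝒜 ha))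
  obtain ⟨δ, hδ0, hδ⟩ := hAcomp.exists_thickening_subset_open
    (hVopen.inter isOpen_interior) hAopen
  set ε : ℝ := δ / 2 with hεdef
  have hε : 0 < ε := by simp only [hεdef]; linarith
  have hsubN : {z : X | infDist z A ≤ ε} ⊆ thickening δ A := by
    intro z hz
    rw [Metric.mem_thickening_iff]
    have hz' : infDist z A ≤ ε := hz
    exact (infDist_lt_iff hAne).1 (lt_of_le_of_lt hz' (by simp only [hεdef]; linarith))
  have hsubV : {z : X | infDist z A ≤ ε} ⊆ V := fun z hz => (hδ (hsubN hz)).1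
  have hsub0 : {z : X | infDist z A ≤ ε} ⊆ U0 :=
    fun z hz => interior_subset (hδ (hsubN hz)).2
  -- Stability: orbits starting close enough to A stay ε-close to A
  have hstab : ∃ δ' : ℝ, 0 < δ' ∧ ∀ x : X, infDist x A < δ' →
      ∀ t : ℝ, 0 ≤ t → infDist (φ.toFun t x) A ≤ ε := by
    by_contra hcon
    push_neg at hcon
    have hsel : ∀ n : ℕ, ∃ x : X, infDist x A < ε / (n + 1) ∧
        ∃ t, 0 ≤ t ∧ ε < infDist (φ.toFun t x) A := by
      intro n
      obtain ⟨x, hx1, t, ht0, ht⟩ := hcon (ε / (n + 1)) (by positivity)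
      exact ⟨x, hx1, t, ht0, ht⟩
    choose xx hxx tbad htbad0 htbad using hsel
    set g : ℕ → ℝ → ℝ := fun n u => infDist (φ.toFun u (xx n)) A with hgdef
    have hgc : ∀ n, ContinuousOn (g n) (Set.Ici (0:ℝ)) := by
      intro n
      have h1 : ContinuousOn (fun u : ℝ => φ.toFun u (xx n)) (Set.Ici (0:ℝ)) := by
        have h2 : ContinuousOn (fun u : ℝ => ((u, xx n) : ℝ × X)) (Set.Ici (0:ℝ)) :=
          (continuous_id.prodMk continuous_const).continuousOn
        exact φ.continuousOn.comp h2 (fun u hu => ⟨hu, mem_univ _⟩)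
      exact (continuous_infDist_pt A).comp_continuousOn h1
    set E : ℕ → Set ℝ := fun n => Set.Ici (0:ℝ) ∩ (g n) ⁻¹' Set.Ici ε with hEdef
    have hEc : ∀ n, IsClosed (E n) :=
      fun n => (hgc n).preimage_isClosed_of_isClosed isClosed_Ici isClosed_Ici
    have hEne : ∀ n, (E n).Nonempty := fun n => ⟨tbad n, htbad0 n, (htbad n).le⟩
    have hbdd : ∀ n, BddBelow (E n) := fun n => ⟨0, fun u hu => hu.1⟩
    set ss : ℕ → ℝ := fun n => sInf (E n) with hssdef
    have hmem : ∀ n, ss n ∈ E n := fun n => (hEc n).csInf_mem (hEne n) (hbdd n)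
    have hss0 : ∀ n, 0 ≤ ss n := fun n => (hmem n).1
    have hssfar : ∀ n, ε ≤ g n (ss n) := fun n => (hmem n).2
    have hbefore : ∀ n, ∀ u, 0 ≤ u → u < ss n → infDist (φ.toFun u (xx n)) A ≤ ε := by
      intro n u hu hlt
      by_contra hcc
      push_neg at hcc
      exact notMem_of_lt_csInf hlt (hbdd n) ⟨hu, hcc.le⟩
    -- the exit times tend to infinity
    have hstop : Tendsto ss atTop atTop := by
      by_contra hns
      rw [Filter.tendsto_atTop] at hns
      push_neg at hns
      obtain ⟨C, hC⟩ := hns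
      obtain ⟨k1, hk1mono, hk1⟩ := Filter.extraction_of_frequently_atTop hC
      have hsel2 : ∀ n, ∃ a, a ∈ A ∧ dist (xx n) a < ε / (n + 1) := by
        intro n
        obtain ⟨a, ha, hd⟩ := (infDist_lt_iff hAne).1 (hxx n)
        exact ⟨a, ha, hd⟩
      choose aa haaA haad using hsel2
      obtain ⟨a0, ha0A, k2, hk2mono, hk2⟩ :=
        hAcomp.tendsto_subseq (x := fun n => aa (k1 n)) (fun n => haaA (k1 n))
      obtain ⟨sstar, hsmem, k3, hk3mono, hk3⟩ :=
        (isCompact_Icc (a := (0:ℝ)) (b := C)).tendsto_subseq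
          (x := fun n => ss (k1 (k2 n))) (fun n => ⟨hss0 _, (hk1 (k2 n)).le⟩)
      set σ : ℕ → ℕ := fun n => k1 (k2 (k3 n)) with hσdef
      have hσmono : StrictMono σ := hk1mono.comp (hk2mono.comp hk3mono)
      have hd0 : Tendsto (fun n : ℕ => ε / ((n : ℝ) + 1)) atTop (𝓝 0) := by
        have := tendsto_one_div_add_atTop_nhds_zero_nat.const_mul ε
        simpa [mul_one_div, div_eq_mul_inv] using this
      have haconv : Tendsto (fun n => aa (σ n)) atTop (𝓝 a0) :=
        hk2.comp hk3mono.tendsto_atTop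
      have hxxlim : Tendsto (fun n => xx (σ n)) atTop (𝓝 a0) := by
        rw [tendsto_iff_dist_tendsto_zero]
        refine squeeze_zero (fun n => dist_nonneg)
          (g := fun n => ε / ((σ n : ℝ) + 1) + dist (aa (σ n)) a0) (fun n => ?_) ?_
        · calc dist (xx (σ n)) a0 ≤ dist (xx (σ n)) (aa (σ n)) + dist (aa (σ n)) a0 :=
            dist_triangle _ _ _
          _ ≤ ε / ((σ n : ℝ) + 1) + dist (aa (σ n)) a0 := by
              have := haad (σ n); linarith
        · have h1 : Tendsto (fun n => ε / ((σ n : ℝ) + 1)) atTop (𝓝 0) :=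
            hd0.comp hσmono.tendsto_atTop
          have h2 : Tendsto (fun n => dist (aa (σ n)) a0) atTop (𝓝 0) :=
            tendsto_iff_dist_tendsto_zero.1 haconv
          simpa using h1.add h2
      have hsslim : Tendsto (fun n => ss (σ n)) atTop (𝓝 sstar) := hk3
      have hflow := φ.tendsto_flow (fun n => hss0 (σ n)) hsmem.1 hsslim hxxlim
      have hlim : ε ≤ infDist (φ.toFun sstar a0) A :=
        ge_of_tendsto (((continuous_infDist_pt A).tendsto _).comp hflow)
          (Eventually.of_forall fun n => hssfar (σ n))
      have hmemA : φ.toFun sstar a0 ∈ A := by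
        rw [← hAinv sstar hsmem.1]
        exact ⟨a0, ha0A, rfl⟩
      rw [infDist_zero_of_mem hmemA] at hlim
      linarith
    exact φ.key_s7 hac h𝒜comp.isClosed hA𝒜 h𝒜att hAne hAcomp.isBounded hAatt hε
      hsubV hsub0 hstop hbefore hε hssfar
  obtain ⟨δ', hδ'0, hstab⟩ := hstab
  refine ⟨{z : X | infDist z A < δ'}, ?_, ?_⟩
  · have hop : IsOpen {z : X | infDist z A < δ'} :=
      isOpen_lt (continuous_infDist_pt A) continuous_const
    rw [hop.interior_eq]
    intro a ha
    simpa [infDist_zero_of_mem ha] using hδ'0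
  · by_contra hcon
    rw [Semiflow.Attracts] at hcon
    push_neg at hcon
    obtain ⟨ε'', hε''0, hbad⟩ := hcon
    have hsel3 : ∀ n : ℕ, ∃ t, (n : ℝ) + 1 < t ∧ ∃ x,
        infDist x A < δ' ∧ ε'' ≤ infDist (φ.toFun t x) A := by
      intro n
      obtain ⟨t, ht, x, hx, hfar⟩ := hbad ((n : ℝ) + 1) (by positivity)
      exact ⟨t, ht, x, hx, hfar⟩
    choose tt htt xx2 hxx2 hxx2far using hsel3
    have htttop : Tendsto tt atTop atTop := by
      refine tendsto_atTop_mono (fun n => (htt n).le) ?_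
      exact tendsto_atTop_add_const_right atTop 1 tendsto_natCast_atTop_atTop
    have horb2 : ∀ n, ∀ u, 0 ≤ u → u < tt n → infDist (φ.toFun u (xx2 n)) A ≤ ε :=
      fun n u hu _ => hstab (xx2 n) (hxx2 n) u hu
    exact φ.key_s7 hac h𝒜comp.isClosed hA𝒜 h𝒜att hAne hAcomp.isBounded hAatt hε
      hsubV hsub0 htttop horb2 hε''0 hxx2far
end

section
/- Let S be an asymptotically compact semiflow on a complete metric space X, 𝒜 an attractor of S, and ℳ = {M₁, …, M_l} a Morse decomposition of 𝒜 with Morse filtration ∅ = A₀ ⊊ A₁ ⊊ ⋯ ⊊ A_l = 𝒜. Then: (i) for every complete trajectory γ in 𝒜, either γ(ℝ) ⊆ M_k for some k, or there are indices i < j such that α(γ) ⊆ M_j and ω(γ) ⊆ M_i; and (ii) the attractors A_k are determined by the Morse sets via A_k = ⋃_{1 ≤ i ≤ k} Wᵘ(M_i), where Wᵘ(M_i) = {γ(0) : γ is a complete trajectory in 𝒜 with α(γ) ⊆ M_i}. -/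
open Metric Set Filter Topology Bornology

namespace Semiflow

variable {X : Type*} [MetricSpace X] (φ : Semiflow X)

/-- Sequential continuity of the time-`s` map. -/
lemma tendsto_comp_map {s : ℝ} (hs : 0 ≤ s) {u : ℕ → X} {y : X}
    (hu : Tendsto u atTop (𝓝 y)) :
    Tendsto (fun n => φ.toFun s (u n)) atTop (𝓝 (φ.toFun s y)) := by
  have hc : ContinuousWithinAt (fun p : ℝ × X => φ.toFun p.1 p.2)
      (Set.Ici (0:ℝ) ×ˢ Set.univ) (s, y) :=
    φ.continuousOn (s, y) (by simp [hs])
  have hp : Tendsto (fun n => ((s, u n) : ℝ × X)) atTop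
      (𝓝[Set.Ici (0:ℝ) ×ˢ Set.univ] (s, y)) := by
    apply tendsto_nhdsWithin_of_tendsto_nhds_of_eventually_within
    · exact (tendsto_const_nhds : Tendsto (fun _ : ℕ => s) atTop (𝓝 s)).prodMk_nhds hu
    · exact Filter.Eventually.of_forall fun n => by simp [hs]
  exact hc.tendsto.comp hp

lemma inv_mem {K : Set X} (hK : φ.Invariant K) {t : ℝ} (ht : 0 ≤ t) {x : X}
    (hx : x ∈ K) : φ.toFun t x ∈ K := by
  have := hK t ht
  rw [← this]
  exact Set.mem_image_of_mem _ hx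

lemma trajOmega_subset {γ : ℝ → X} {C : Set X} (hC : IsClosed C)
    (h : ∀ t, γ t ∈ C) : trajOmega γ ⊆ C := by
  rintro z ⟨t, -, htz⟩
  exact hC.mem_of_tendsto htz (Filter.Eventually.of_forall fun n => h _)

lemma trajAlpha_subset {γ : ℝ → X} {C : Set X} (hC : IsClosed C)
    (h : ∀ t, γ t ∈ C) : trajAlpha γ ⊆ C := by
  rintro z ⟨t, -, htz⟩
  exact hC.mem_of_tendsto htz (Filter.Eventually.of_forall fun n => h _)

lemma trajOmega_nonempty {γ : ℝ → X} {C : Set X} (hC : IsCompact C)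
    (h : ∀ t, γ t ∈ C) : (trajOmega γ).Nonempty := by
  obtain ⟨y, -, k, hk, hky⟩ := hC.tendsto_subseq (x := fun n : ℕ => γ n) fun n => h _
  exact ⟨y, fun n => ((k n : ℕ) : ℝ),
    tendsto_natCast_atTop_atTop.comp hk.tendsto_atTop, hky⟩

lemma trajAlpha_nonempty {γ : ℝ → X} {C : Set X} (hC : IsCompact C)
    (h : ∀ t, γ t ∈ C) : (trajAlpha γ).Nonempty := by
  obtain ⟨y, -, k, hk, hky⟩ := hC.tendsto_subseq (x := fun n : ℕ => γ (-(n:ℝ))) fun n => h _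
  refine ⟨y, fun n => -((k n : ℕ) : ℝ), ?_, hky⟩
  exact tendsto_neg_atBot_iff.mpr (tendsto_natCast_atTop_atTop.comp hk.tendsto_atTop)

lemma trajOmega_fwd {γ : ℝ → X} (hγ : φ.IsCompleteTraj γ) {y : X}
    (hy : y ∈ trajOmega γ) {s : ℝ} (hs : 0 ≤ s) : φ.toFun s y ∈ trajOmega γ := by
  obtain ⟨t, htT, hty⟩ := hy
  refine ⟨fun n => t n + s, tendsto_atTop_add_const_right _ s htT, ?_⟩
  have h1 := φ.tendsto_comp_map hs hty
  have h2 : ∀ n, γ (t n + s) = φ.toFun s (γ (t n)) := by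
    intro n
    rw [hγ (t n) (t n + s) (by linarith)]
    ring_nf
  simpa only [h2] using h1

lemma trajAlpha_fwd {γ : ℝ → X} (hγ : φ.IsCompleteTraj γ) {y : X}
    (hy : y ∈ trajAlpha γ) {s : ℝ} (hs : 0 ≤ s) : φ.toFun s y ∈ trajAlpha γ := by
  obtain ⟨t, htT, hty⟩ := hy
  refine ⟨fun n => t n + s, tendsto_atBot_add_const_right _ s htT, ?_⟩
  have h1 := φ.tendsto_comp_map hs hty
  have h2 : ∀ n, γ (t n + s) = φ.toFun s (γ (t n)) := by
    intro n
    rw [hγ (t n) (t n + s) (by linarith)]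
    ring_nf
  simpa only [h2] using h1

lemma Lomega {𝒜 B V : Set X} (hBne : B.Nonempty) (hBcl : IsClosed B)
    (hatt : φ.Attracts B (𝒜 ∩ V)) {γ : ℝ → X} (hγ : φ.IsCompleteTraj γ)
    (hγ𝒜 : ∀ t, γ t ∈ 𝒜) {r : ℝ} (hr : γ r ∈ V) : trajOmega γ ⊆ B := by
  rintro z ⟨t, htT, htz⟩
  have hle : ∀ ε > (0:ℝ), infDist z B ≤ ε := by
    intro ε hε
    obtain ⟨T, hT, hW⟩ := hatt ε hε
    have hlim : Tendsto (fun n => infDist (γ (t n)) B) atTop (𝓝 (infDist z B)) :=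
      ((continuous_infDist_pt B).tendsto z).comp htz
    refine le_of_tendsto hlim ?_
    filter_upwards [htT.eventually (eventually_gt_atTop (r + T))] with n hn
    have h1 : γ (t n) = φ.toFun (t n - r) (γ r) := hγ r (t n) (by linarith)
    rw [h1]
    exact (hW (t n - r) (by linarith) (γ r) ⟨hγ𝒜 r, hr⟩).le
  have h0 : infDist z B = 0 := by
    by_contra h
    have hpos : 0 < infDist z B := lt_of_le_of_ne infDist_nonneg (Ne.symm h)
    have := hle (infDist z B / 2) (by linarith)
    linarith
  exact (hBcl.mem_iff_infDist_zero hBne).2 h0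

lemma Lalpha {𝒜 B V : Set X} (hBne : B.Nonempty) (hBcl : IsClosed B)
    (hatt : φ.Attracts B (𝒜 ∩ V)) {γ : ℝ → X} (hγ : φ.IsCompleteTraj γ)
    (hγ𝒜 : ∀ t, γ t ∈ 𝒜) (hr : ∀ b : ℝ, ∃ r ≤ b, γ r ∈ V) : ∀ s, γ s ∈ B := by
  intro s
  have hle : ∀ ε > (0:ℝ), infDist (γ s) B ≤ ε := by
    intro ε hε
    obtain ⟨T, hT, hW⟩ := hatt ε hε
    obtain ⟨r, hrs, hrV⟩ := hr (s - T - 1)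
    have h1 : γ s = φ.toFun (s - r) (γ r) := hγ r s (by linarith)
    rw [h1]
    exact (hW (s - r) (by linarith) (γ r) ⟨hγ𝒜 r, hrV⟩).le
  have h0 : infDist (γ s) B = 0 := by
    by_contra h
    have hpos : 0 < infDist (γ s) B := lt_of_le_of_ne infDist_nonneg (Ne.symm h)
    have := hle (infDist (γ s) B / 2) (by linarith)
    linarith
  exact (hBcl.mem_iff_infDist_zero hBne).2 h0

lemma omegaLimit_singleton_eq {γ : ℝ → X} (hγ : φ.IsCompleteTraj γ) (τ : ℝ) :
    φ.omegaLimit {γ τ} = trajOmega γ := by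
  ext y
  constructor
  · rintro ⟨x, t, hx, ht0, htT, hconv⟩
    refine ⟨fun n => τ + t n, tendsto_atTop_add_const_left _ τ htT, ?_⟩
    have h2 : ∀ n, γ (τ + t n) = φ.toFun (t n) (x n) := by
      intro n
      have hxn : x n = γ τ := hx n
      rw [hγ τ (τ + t n) (by linarith [ht0 n]), hxn]
      ring_nf
    simpa only [h2] using hconv
  · rintro ⟨t, htT, hconv⟩
    obtain ⟨N, hN⟩ := (htT.eventually (eventually_ge_atTop τ)).exists_forall_of_atTop
    refine ⟨fun _ => γ τ, fun n => t (n + N) - τ, fun n => rfl,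
      fun n => sub_nonneg.2 (hN (n + N) (by omega)), ?_, ?_⟩
    · simpa only [sub_eq_add_neg, Function.comp_apply] using
        tendsto_atTop_add_const_right atTop (-τ) (htT.comp (tendsto_add_atTop_nat N))
    · have h2 : ∀ n, φ.toFun (t (n + N) - τ) (γ τ) = γ (t (n + N)) := fun n =>
        (hγ τ (t (n + N)) (hN (n + N) (by omega))).symm
      simpa only [h2, Function.comp_def] using hconv.comp (tendsto_add_atTop_nat N)

lemma exists_complete_traj {K : Set X} (hK : φ.Invariant K) {p : X} (hp : p ∈ K) :
    ∃ γ : ℝ → X, φ.IsCompleteTraj γ ∧ (∀ t, γ t ∈ K) ∧ γ 0 = p := by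
  classical
  have hpre : ∀ w : {z // z ∈ K}, ∃ w' : {z // z ∈ K}, φ.toFun 1 w'.1 = w.1 := by
    rintro ⟨y, hy⟩
    have h1 := hK 1 zero_le_one
    rw [← h1] at hy
    obtain ⟨z, hz, hzy⟩ := hy
    exact ⟨⟨z, hz⟩, hzy⟩
  choose g hg using hpre
  set w0 : {z // z ∈ K} := ⟨p, hp⟩ with hw0
  set xs : ℕ → X := fun n => (g^[n] w0).1 with hxs
  have step : ∀ n k : ℕ, φ.toFun k (xs (n + k)) = xs n := by
    intro n k
    induction k with
    | zero => simp [φ.map_zero]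
    | succ k ih =>
      have hcast : ((k + 1 : ℕ) : ℝ) = (k : ℝ) + 1 := by push_cast; ring
      rw [hcast, φ.map_add k 1 k.cast_nonneg zero_le_one]
      have h1 : xs (n + (k + 1)) = (g (g^[n + k] w0)).1 := by
        rw [hxs]
        simp only [show n + (k + 1) = (n + k) + 1 from by omega,
          Function.iterate_succ_apply']
      rw [h1, hg (g^[n + k] w0)]
      exact ih
  have welldef : ∀ (t : ℝ) (n m : ℕ), n ≤ m → 0 ≤ t + n →
      φ.toFun (t + m) (xs m) = φ.toFun (t + n) (xs n) := by
    intro t n m hnm h0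
    obtain ⟨k, rfl⟩ : ∃ k, m = n + k := ⟨m - n, by omega⟩
    have hcast : ((n + k : ℕ) : ℝ) = (n : ℝ) + k := by push_cast; ring
    have h1 : t + ((n + k : ℕ) : ℝ) = (t + n) + k := by rw [hcast]; ring
    rw [h1, φ.map_add (t + n) k h0 k.cast_nonneg, step n k]
  have hnn : ∀ t : ℝ, 0 ≤ t + (⌈|t|⌉₊ : ℝ) := by
    intro t
    have h1 : |t| ≤ (⌈|t|⌉₊ : ℝ) := Nat.le_ceil _
    have h2 : -t ≤ |t| := neg_le_abs t
    linarith
  refine ⟨fun t => φ.toFun (t + (⌈|t|⌉₊ : ℝ)) (xs ⌈|t|⌉₊), ?_, ?_, ?_⟩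
  · intro s t hst
    set N : ℕ := max ⌈|s|⌉₊ ⌈|t|⌉₊ with hN
    have hsN : (⌈|s|⌉₊ : ℝ) ≤ N := Nat.cast_le.2 (le_max_left _ _)
    have h1 : φ.toFun (t + (⌈|t|⌉₊ : ℝ)) (xs ⌈|t|⌉₊) = φ.toFun (t + N) (xs N) :=
      (welldef t ⌈|t|⌉₊ N (le_max_right _ _) (hnn t)).symm
    have h2 : φ.toFun (s + (⌈|s|⌉₊ : ℝ)) (xs ⌈|s|⌉₊) = φ.toFun (s + N) (xs N) :=
      (welldef s ⌈|s|⌉₊ N (le_max_left _ _) (hnn s)).symm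
    beta_reduce
    rw [h1, h2]
    have h3 : t + (N : ℝ) = (t - s) + (s + N) := by ring
    rw [h3, φ.map_add (t - s) (s + N) (by linarith) (by linarith [hnn s])]
  · intro t
    exact φ.inv_mem hK (hnn t) (g^[⌈|t|⌉₊] w0).2
  · simp [φ.map_zero, hxs, hw0]

lemma cofinal_atBot_of_alpha_mem {γ : ℝ → X} {V : Set X} (hVo : IsOpen V) {y : X}
    (hy : y ∈ trajAlpha γ) (hyV : y ∈ V) : ∀ b : ℝ, ∃ r ≤ b, γ r ∈ V := by
  obtain ⟨t, htB, hty⟩ := hy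
  intro b
  have h1 : ∀ᶠ n in atTop, γ (t n) ∈ V := hty.eventually (hVo.eventually_mem hyV)
  have h2 : ∀ᶠ n in atTop, t n ≤ b := htB.eventually (eventually_le_atBot b)
  obtain ⟨n, hn1, hn2⟩ := (h1.and h2).exists
  exact ⟨t n, hn2, hn1⟩

lemma range_sub_of_alpha {𝒜 B V : Set X} (h𝒜c : IsCompact 𝒜) (hBcl : IsClosed B)
    (hBV : B ⊆ V) (hVo : IsOpen V) (hatt : φ.Attracts B (𝒜 ∩ V)) {γ : ℝ → X}
    (hγ : φ.IsCompleteTraj γ) (hγ𝒜 : ∀ t, γ t ∈ 𝒜) (hαB : trajAlpha γ ⊆ B) :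
    ∀ t, γ t ∈ B := by
  obtain ⟨y, hy⟩ := trajAlpha_nonempty h𝒜c hγ𝒜
  exact φ.Lalpha ⟨y, hαB hy⟩ hBcl hatt hγ hγ𝒜
    (cofinal_atBot_of_alpha_mem hVo hy (hBV (hαB hy)))

lemma omega_not_sub {𝒜 B V : Set X} (h𝒜cl : IsClosed 𝒜) (hBcl : IsClosed B)
    (hBV : B ⊆ V) (hVo : IsOpen V) (hatt : φ.Attracts B (𝒜 ∩ V)) {γ : ℝ → X}
    (hγ : φ.IsCompleteTraj γ) (hγ𝒜 : ∀ t, γ t ∈ 𝒜) (hns : ¬ trajOmega γ ⊆ B) :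
    trajOmega γ ∩ B = ∅ ∧ trajOmega γ ⊆ φ.dualRepeller 𝒜 B := by
  have main : ∀ w ∈ trajOmega γ, w ∈ V → B.Nonempty → trajOmega γ ⊆ B := by
    intro w hw hwV hBne
    obtain ⟨sq, hsT, hsw⟩ := hw
    obtain ⟨n, hn⟩ := (hsw.eventually (hVo.eventually_mem hwV)).exists
    exact φ.Lomega hBne hBcl hatt hγ hγ𝒜 hn
  constructor
  · by_contra h
    obtain ⟨y, hyω, hyB⟩ := Set.nonempty_iff_ne_empty.2 h
    exact hns (main y hyω (hBV hyB) ⟨y, hyB⟩)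
  · intro y hyω
    refine ⟨trajOmega_subset h𝒜cl hγ𝒜 hyω, ?_⟩
    by_contra h
    obtain ⟨z, hz1, hz2⟩ := Set.nonempty_iff_ne_empty.2 h
    obtain ⟨x, tt, hx, ht0, htT, hconv⟩ := hz1
    have hxy : ∀ n, x n = y := hx
    simp only [hxy] at hconv
    obtain ⟨n, hn⟩ := (hconv.eventually (hVo.eventually_mem (hBV hz2))).exists
    have hw : φ.toFun (tt n) y ∈ trajOmega γ := φ.trajOmega_fwd hγ hyω (ht0 n)
    exact hns (main _ hw hn ⟨z, hz2⟩)

lemma alpha_not_sub {𝒜 B V : Set X} (h𝒜cl : IsClosed 𝒜) (hBcl : IsClosed B)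
    (hBV : B ⊆ V) (hVo : IsOpen V) (hatt : φ.Attracts B (𝒜 ∩ V)) {γ : ℝ → X}
    (hγ : φ.IsCompleteTraj γ) (hγ𝒜 : ∀ t, γ t ∈ 𝒜) (hns : ¬ trajAlpha γ ⊆ B) :
    trajAlpha γ ∩ B = ∅ ∧ trajAlpha γ ⊆ φ.dualRepeller 𝒜 B := by
  have main : ∀ w ∈ trajAlpha γ, w ∈ V → B.Nonempty → trajAlpha γ ⊆ B := by
    intro w hw hwV hBne
    have hrange := φ.Lalpha hBne hBcl hatt hγ hγ𝒜
      (cofinal_atBot_of_alpha_mem hVo hw hwV)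
    exact trajAlpha_subset hBcl hrange
  constructor
  · by_contra h
    obtain ⟨y, hyα, hyB⟩ := Set.nonempty_iff_ne_empty.2 h
    exact hns (main y hyα (hBV hyB) ⟨y, hyB⟩)
  · intro y hyα
    refine ⟨trajAlpha_subset h𝒜cl hγ𝒜 hyα, ?_⟩
    by_contra h
    obtain ⟨z, hz1, hz2⟩ := Set.nonempty_iff_ne_empty.2 h
    obtain ⟨x, tt, hx, ht0, htT, hconv⟩ := hz1
    have hxy : ∀ n, x n = y := hx
    simp only [hxy] at hconv
    obtain ⟨n, hn⟩ := (hconv.eventually (hVo.eventually_mem (hBV hz2))).exists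
    have hw : φ.toFun (tt n) y ∈ trajAlpha γ := φ.trajAlpha_fwd hγ hyα (ht0 n)
    exact hns (main _ hw hn ⟨z, hz2⟩)

lemma key_omega {𝒜 : Set X} (h𝒜c : IsCompact 𝒜) {l : ℕ} {M A : ℕ → Set X}
    (hMD : φ.IsMorseDecompositionWithFiltration 𝒜 l M A)
    {γ : ℝ → X} (hγ : φ.IsCompleteTraj γ) (hγ𝒜 : ∀ t, γ t ∈ 𝒜) :
    ∃ i, 1 ≤ i ∧ i ≤ l ∧ trajOmega γ ⊆ M i ∧ trajOmega γ ⊆ A i ∧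
      trajOmega γ ∩ A (i - 1) = ∅ ∧ ∀ m, trajOmega γ ⊆ A m → i ≤ m := by
  classical
  obtain ⟨hA0, hAl, hAttr, hchain, hM⟩ := hMD
  have hωsub : trajOmega γ ⊆ 𝒜 := trajOmega_subset h𝒜c.isClosed hγ𝒜
  have hωne : (trajOmega γ).Nonempty := trajOmega_nonempty h𝒜c hγ𝒜
  have hex : ∃ i, trajOmega γ ⊆ A i := ⟨l, hAl ▸ hωsub⟩
  have hspec : trajOmega γ ⊆ A (Nat.find hex) := Nat.find_spec hex
  set i := Nat.find hex with hidef
  have hil : i ≤ l := Nat.find_le (hAl ▸ hωsub)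
  have hi1 : 1 ≤ i := by
    rcases Nat.eq_zero_or_pos i with h | h
    · exfalso
      rw [h, hA0] at hspec
      exact hωne.ne_empty (Set.subset_empty_iff.1 hspec)
    · exact h
  have hdd : trajOmega γ ∩ A (i - 1) = ∅ ∧
      trajOmega γ ⊆ φ.dualRepeller 𝒜 (A (i - 1)) := by
    rcases eq_or_lt_of_le hi1 with h1 | h2
    · constructor
      · rw [← h1, Nat.sub_self, hA0, Set.inter_empty]
      · intro y hy
        refine ⟨hωsub hy, ?_⟩
        rw [← h1, Nat.sub_self, hA0, Set.inter_empty]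
    · have h1i : 1 ≤ i - 1 := by omega
      have hile : i - 1 ≤ l := by omega
      obtain ⟨hsub', hcomp', hinv', V, hVo, hBV, hatt⟩ := hAttr (i - 1) h1i hile
      have hns : ¬ trajOmega γ ⊆ A (i - 1) := Nat.find_min hex (by omega)
      exact φ.omega_not_sub h𝒜c.isClosed hcomp'.isClosed hBV hVo hatt hγ hγ𝒜 hns
  refine ⟨i, hi1, hil, ?_, hspec, hdd.1, fun m hm => Nat.find_le hm⟩
  rw [hM i hi1 hil]
  exact Set.subset_inter hspec hdd.2

lemma key_alpha {𝒜 : Set X} (h𝒜c : IsCompact 𝒜) {l : ℕ} {M A : ℕ → Set X}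
    (hMD : φ.IsMorseDecompositionWithFiltration 𝒜 l M A)
    {γ : ℝ → X} (hγ : φ.IsCompleteTraj γ) (hγ𝒜 : ∀ t, γ t ∈ 𝒜) :
    ∃ j, 1 ≤ j ∧ j ≤ l ∧ trajAlpha γ ⊆ M j ∧ (∀ t, γ t ∈ A j) ∧
      ∀ m, trajAlpha γ ⊆ A m → j ≤ m := by
  classical
  obtain ⟨hA0, hAl, hAttr, hchain, hM⟩ := hMD
  have hαsub : trajAlpha γ ⊆ 𝒜 := trajAlpha_subset h𝒜c.isClosed hγ𝒜
  have hαne : (trajAlpha γ).Nonempty := trajAlpha_nonempty h𝒜c hγ𝒜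
  have hex : ∃ j, trajAlpha γ ⊆ A j := ⟨l, hAl ▸ hαsub⟩
  have hspec : trajAlpha γ ⊆ A (Nat.find hex) := Nat.find_spec hex
  set j := Nat.find hex with hjdef
  have hjl : j ≤ l := Nat.find_le (hAl ▸ hαsub)
  have hj1 : 1 ≤ j := by
    rcases Nat.eq_zero_or_pos j with h | h
    · exfalso
      rw [h, hA0] at hspec
      exact hαne.ne_empty (Set.subset_empty_iff.1 hspec)
    · exact h
  obtain ⟨hsubj, hcompj, hinvj, Vj, hVoj, hBVj, hattj⟩ := hAttr j hj1 hjl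
  have hrange : ∀ t, γ t ∈ A j :=
    φ.range_sub_of_alpha h𝒜c hcompj.isClosed hBVj hVoj hattj hγ hγ𝒜 hspec
  have hdd : trajAlpha γ ⊆ φ.dualRepeller 𝒜 (A (j - 1)) := by
    rcases eq_or_lt_of_le hj1 with h1 | h2
    · intro y hy
      refine ⟨hαsub hy, ?_⟩
      rw [← h1, Nat.sub_self, hA0, Set.inter_empty]
    · have h1j : 1 ≤ j - 1 := by omega
      have hjle : j - 1 ≤ l := by omega
      obtain ⟨hsub', hcomp', hinv', V, hVo, hBV, hatt⟩ := hAttr (j - 1) h1j hjle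
      have hns : ¬ trajAlpha γ ⊆ A (j - 1) := Nat.find_min hex (by omega)
      exact (φ.alpha_not_sub h𝒜c.isClosed hcomp'.isClosed hBV hVo hatt hγ hγ𝒜 hns).2
  refine ⟨j, hj1, hjl, ?_, hrange, fun m hm => Nat.find_le hm⟩
  rw [hM j hj1 hjl]
  exact Set.subset_inter hspec hdd

end Semiflow

/-- (i) Every complete trajectory in `𝒜` either lies in some Morse set, or
connects `M j` to `M i` with `i < j`; (ii) the filtration attractors are the unions of the
unstable sets of the Morse sets. -/
theorem stmt9 {X : Type*} [MetricSpace X] [CompleteSpace X] (φ : Semiflow X)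
    (hac : φ.AsympCompact) (𝒜 : Set X) (h𝒜 : φ.IsAttractor 𝒜)
    (l : ℕ) (hl : 1 ≤ l) (M A : ℕ → Set X)
    (hMD : φ.IsMorseDecompositionWithFiltration 𝒜 l M A) :
    (∀ γ : ℝ → X, φ.IsCompleteTraj γ → (∀ t, γ t ∈ 𝒜) →
      (∃ k, 1 ≤ k ∧ k ≤ l ∧ Set.range γ ⊆ M k) ∨
      (∃ i j, 1 ≤ i ∧ i < j ∧ j ≤ l ∧
        Semiflow.trajAlpha γ ⊆ M j ∧ Semiflow.trajOmega γ ⊆ M i)) ∧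
    (∀ k, 1 ≤ k → k ≤ l →
      A k = {p : X | ∃ γ : ℝ → X, φ.IsCompleteTraj γ ∧ (∀ t, γ t ∈ 𝒜) ∧ γ 0 = p ∧
        ∃ i, 1 ≤ i ∧ i ≤ k ∧ Semiflow.trajAlpha γ ⊆ M i}) := by
  classical
  obtain ⟨hA0, hAl, hAttr, hchain, hM⟩ := id hMD
  have h𝒜c : IsCompact 𝒜 := h𝒜.1
  have hmono : ∀ k, k ≤ l → ∀ i, i ≤ k → A i ⊆ A k := by
    intro k
    induction k with
    | zero =>
      intro _ i hi
      interval_cases i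
      exact subset_rfl
    | succ k ih =>
      intro hk i hi
      rcases Nat.eq_or_lt_of_le hi with h | h
      · subst h; exact subset_rfl
      · have h1 : A i ⊆ A k := ih (by omega) i (by omega)
        have h2 : A k ⊆ A (k + 1) := by
          have h3 := (hchain (k + 1) (by omega) hk).subset
          simpa using h3
        exact h1.trans h2
  constructor
  · intro γ hγ hγ𝒜
    obtain ⟨i, hi1, hil, hωM, hωA, hωdisj, himin⟩ := φ.key_omega h𝒜c hMD hγ hγ𝒜
    obtain ⟨j, hj1, hjl, hαM, hrange, hjmin⟩ := φ.key_alpha h𝒜c hMD hγ hγ𝒜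
    have hωAj : Semiflow.trajOmega γ ⊆ A j :=
      Semiflow.trajOmega_subset (hAttr j hj1 hjl).2.1.isClosed hrange
    have hij : i ≤ j := himin j hωAj
    rcases eq_or_lt_of_le hij with heq | hlt
    · left
      refine ⟨i, hi1, hil, ?_⟩
      rintro _ ⟨τ, rfl⟩
      rw [hM i hi1 hil]
      refine ⟨by rw [heq]; exact hrange τ, hγ𝒜 τ, ?_⟩
      rw [φ.omegaLimit_singleton_eq hγ τ]
      exact hωdisj
    · right
      exact ⟨i, j, hi1, hlt, hjl, hαM, hωM⟩
  · intro k hk1 hkl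
    ext p
    simp only [Set.mem_setOf_eq]
    constructor
    · intro hp
      have hAk := hAttr k hk1 hkl
      obtain ⟨γ, hγ, hγK, hγ0⟩ := φ.exists_complete_traj hAk.2.2.1 hp
      have hγ𝒜 : ∀ t, γ t ∈ 𝒜 := fun t => hAk.1 (hγK t)
      obtain ⟨j, hj1, hjl, hαM, hrange, hjmin⟩ := φ.key_alpha h𝒜c hMD hγ hγ𝒜
      have hαk : Semiflow.trajAlpha γ ⊆ A k :=
        Semiflow.trajAlpha_subset hAk.2.1.isClosed hγK
      exact ⟨γ, hγ, hγ𝒜, hγ0, j, hj1, hjmin k hαk, hαM⟩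
    · rintro ⟨γ, hγ, hγ𝒜, hγ0, i, hi1, hik, hαM⟩
      have hil : i ≤ l := le_trans hik hkl
      have hαAi : Semiflow.trajAlpha γ ⊆ A i := by
        rw [hM i hi1 hil] at hαM
        exact hαM.trans Set.inter_subset_left
      have hαAk : Semiflow.trajAlpha γ ⊆ A k := hαAi.trans (hmono k hkl i hik)
      obtain ⟨hsub, hcomp, hinv, V, hVo, hBV, hatt⟩ := hAttr k hk1 hkl
      have hr := φ.range_sub_of_alpha h𝒜c hcomp.isClosed hBV hVo hatt hγ hγ𝒜 hαAk
      rw [← hγ0]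
      exact hr 0
end
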